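/- arXiv:1806.09529 — 5 statements merged into one kernel-verified Lean document; each statement's English description precedes it below -/
import Mathlib

section
/- Let N and M be positive integers and let F ∈ ℝ^{M×M} be a symmetric matrix. For every z ∈ ℂ with Im z > 0 there exists a unique m ∈ ℂ with Im m > 0 such that the matrix Id_M + m·F is invertible and z = −1/m + (1/N)·Tr(F·(Id_M + m·F)^{−1}). -/
set_option maxHeartbeats 1000000

open Matrix

namespace MPaux

open Finset Complex Filter Topology

variable {M : ℕ}

noncomputable def S (c p : Fin M → ℝ) (u : ℂ) : ℝ :=
  ∑ i, c i / Complex.normSq (u - (p i : ℂ))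

noncomputable def Th (c p : Fin M → ℝ) (w u : ℂ) : ℂ :=
  w - ∑ i, (c i : ℂ) / (u - (p i : ℂ))

lemma sub_p_ne {u : ℂ} (hu : 0 < u.im) (p : ℝ) : u - (p : ℂ) ≠ 0 := by
  intro h
  have : (u - (p : ℂ)).im = 0 := by rw [h]; simp
  simp [Complex.sub_im] at this
  linarith

lemma S_nonneg {c p : Fin M → ℝ} (hc : ∀ i, 0 ≤ c i) (u : ℂ) : 0 ≤ S c p u :=
  Finset.sum_nonneg fun i _ => div_nonneg (hc i) (Complex.normSq_nonneg _)

lemma term_im {c : ℝ} {u q : ℂ} :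
    ((c : ℂ) / (u - q)).im = -(c / Complex.normSq (u - q) * (u - q).im) := by
  rw [div_eq_mul_inv, Complex.mul_im, Complex.ofReal_re, Complex.ofReal_im, Complex.inv_im]
  field_simp
  ring

lemma im_Th (c p : Fin M → ℝ) (w u : ℂ) :
    (Th c p w u).im = w.im + u.im * S c p u := by
  rw [Th, Complex.sub_im, Complex.im_sum, S, Finset.mul_sum]
  rw [sub_eq_add_neg, ← Finset.sum_neg_distrib]
  congr 1
  refine Finset.sum_congr rfl fun i _ => ?_
  rw [term_im]
  have : (u - (p i : ℂ)).im = u.im := by simp [Complex.sub_im]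
  rw [this]
  ring


lemma abs_Th_sub_le {c : Fin M → ℝ} (p : Fin M → ℝ) (hc : ∀ i, 0 ≤ c i)
    {w u : ℂ} (hw : 0 < w.im) (hu : w.im ≤ u.im) :
    ‖Th c p w u - w‖ ≤ (∑ i, c i) / w.im := by
  have hui : 0 < u.im := lt_of_lt_of_le hw hu
  have h1 : Th c p w u - w = -∑ i, (c i : ℂ) / (u - (p i : ℂ)) := by
    rw [Th]; ring
  rw [h1, norm_neg]
  calc ‖∑ i, (c i : ℂ) / (u - (p i : ℂ))‖
      ≤ ∑ i, ‖(c i : ℂ) / (u - (p i : ℂ))‖ := by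
        exact norm_sum_le _ _
    _ ≤ ∑ i, c i / w.im := by
        refine Finset.sum_le_sum fun i _ => ?_
        rw [norm_div, Complex.norm_of_nonneg (hc i)]
        have h2 : w.im ≤ ‖u - (p i : ℂ)‖ := by
          calc w.im ≤ u.im := hu
            _ = (u - (p i : ℂ)).im := by simp
            _ ≤ |(u - (p i : ℂ)).im| := le_abs_self _
            _ ≤ ‖u - (p i : ℂ)‖ := Complex.abs_im_le_norm _
        exact div_le_div_of_nonneg_left (hc i) hw h2
    _ = (∑ i, c i) / w.im := by rw [Finset.sum_div]

lemma S_le {c : Fin M → ℝ} (p : Fin M → ℝ) (hc : ∀ i, 0 ≤ c i)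
    {w u : ℂ} (hw : 0 < w.im) (hu : w.im ≤ u.im) :
    S c p u ≤ (∑ i, c i) / w.im ^ 2 := by
  rw [S, Finset.sum_div]
  refine Finset.sum_le_sum fun i _ => ?_
  have h2 : w.im ^ 2 ≤ Complex.normSq (u - (p i : ℂ)) := by
    rw [Complex.normSq_apply]
    have : (u - (p i : ℂ)).im = u.im := by simp
    nlinarith [sq_nonneg (u - (p i : ℂ)).re]
  exact div_le_div_of_nonneg_left (hc i) (by positivity) h2

lemma Th_sub_Th {c p : Fin M → ℝ} {u v : ℂ} (hu : 0 < u.im) (hv : 0 < v.im) (w : ℂ) :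
    Th c p w u - Th c p w v
      = (u - v) * ∑ i, (c i : ℂ) / ((u - (p i : ℂ)) * (v - (p i : ℂ))) := by
  rw [Th, Th, Finset.mul_sum, sub_sub_sub_cancel_left, ← Finset.sum_sub_distrib]
  refine Finset.sum_congr rfl fun i _ => ?_
  have h1 := sub_p_ne hu (p i)
  have h2 := sub_p_ne hv (p i)
  field_simp
  ring

lemma abs_T_sq_le {c p : Fin M → ℝ} (hc : ∀ i, 0 ≤ c i) {u v : ℂ}
    (hu : 0 < u.im) (hv : 0 < v.im) :
    ‖∑ i, (c i : ℂ) / ((u - (p i : ℂ)) * (v - (p i : ℂ)))‖ ^ 2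
      ≤ S c p u * S c p v := by
  set f : Fin M → ℝ := fun i => Real.sqrt (c i) / ‖u - (p i : ℂ)‖
  set g : Fin M → ℝ := fun i => Real.sqrt (c i) / ‖v - (p i : ℂ)‖
  have habs : ‖∑ i, (c i : ℂ) / ((u - (p i : ℂ)) * (v - (p i : ℂ)))‖
      ≤ ∑ i, f i * g i := by
    refine le_trans (norm_sum_le _ _) (Finset.sum_le_sum fun i _ => ?_)
    rw [norm_div, norm_mul, Complex.norm_of_nonneg (hc i)]
    have : f i * g i = c i / (‖u - (p i : ℂ)‖ * ‖v - (p i : ℂ)‖) := by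
      simp only [f, g]
      rw [div_mul_div_comm, Real.mul_self_sqrt (hc i)]
    rw [this]
  have hcs := Finset.sum_mul_sq_le_sq_mul_sq Finset.univ f g
  have hf : ∑ i, f i ^ 2 = S c p u := by
    refine Finset.sum_congr rfl fun i _ => ?_
    simp only [f, div_pow, Real.sq_sqrt (hc i), Complex.sq_norm]
  have hg : ∑ i, g i ^ 2 = S c p v := by
    refine Finset.sum_congr rfl fun i _ => ?_
    simp only [g, div_pow, Real.sq_sqrt (hc i), Complex.sq_norm]
  have h0 : (0:ℝ) ≤ ∑ i, f i * g i :=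
    Finset.sum_nonneg fun i _ => mul_nonneg (by positivity) (by positivity)
  calc ‖∑ i, (c i : ℂ) / ((u - (p i : ℂ)) * (v - (p i : ℂ)))‖ ^ 2
      ≤ (∑ i, f i * g i) ^ 2 := by
        exact pow_le_pow_left₀ (norm_nonneg _) habs 2
    _ ≤ (∑ i, f i ^ 2) * ∑ i, g i ^ 2 := hcs
    _ = S c p u * S c p v := by rw [hf, hg]

lemma contraction_core {c p : Fin M → ℝ} (hc : ∀ i, 0 ≤ c i) {u v : ℂ}
    (hu : 0 < u.im) (hv : 0 < v.im) (w : ℂ) :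
    ‖Th c p w u - Th c p w v‖ ^ 2
      ≤ ‖u - v‖ ^ 2 * (S c p u * S c p v) := by
  rw [Th_sub_Th hu hv, norm_mul, mul_pow]
  exact mul_le_mul_of_nonneg_left (abs_T_sq_le hc hu hv) (by positivity)


/-- Uniqueness of the fixed point in the upper half-plane. -/
lemma fixed_point_unique {c p : Fin M → ℝ} (hc : ∀ i, 0 ≤ c i) {w : ℂ} (hw : 0 < w.im)
    {u v : ℂ} (hu : 0 < u.im) (hv : 0 < v.im)
    (hfu : u = Th c p w u) (hfv : v = Th c p w v) : u = v := by
  by_contra hne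
  have habs : 0 < ‖u - v‖ := by
    simpa using (norm_pos_iff.mpr (sub_ne_zero.mpr hne))
  have hSu : u.im * S c p u = u.im - w.im := by
    have := congrArg Complex.im hfu
    rw [im_Th] at this; linarith
  have hSv : v.im * S c p v = v.im - w.im := by
    have := congrArg Complex.im hfv
    rw [im_Th] at this; linarith
  have hSu1 : S c p u < 1 := by
    rcases lt_or_ge (S c p u) 1 with h | h
    · exact h
    · nlinarith
  have hSv1 : S c p v < 1 := by
    rcases lt_or_ge (S c p v) 1 with h | h
    · exact h
    · nlinarith
  have hkey := contraction_core (p := p) hc hu hv w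
  rw [← hfu, ← hfv] at hkey
  have hs1 : S c p u * S c p v < 1 := by
    nlinarith [S_nonneg (p := p) hc u, S_nonneg (p := p) hc v]
  have hsq : 0 < ‖u - v‖ ^ 2 := by positivity
  nlinarith [mul_lt_mul_of_pos_left hs1 hsq]


def inK (c : Fin M → ℝ) (w : ℂ) (u : ℂ) : Prop :=
  w.im ≤ u.im ∧ ‖u - w‖ ≤ (∑ i, c i) / w.im

lemma Th_mem_inK {c p : Fin M → ℝ} {w : ℂ} (hc : ∀ i, 0 ≤ c i) (hw : 0 < w.im)
    {u : ℂ} (hu : w.im ≤ u.im) : inK c w (Th c p w u) := by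
  have hu0 : 0 < u.im := lt_of_lt_of_le hw hu
  constructor
  · rw [im_Th]
    nlinarith [S_nonneg (p := p) hc u]
  · exact abs_Th_sub_le p hc hw hu

lemma inK_im_le {c : Fin M → ℝ} {w : ℂ} (hc : ∀ i, 0 ≤ c i) (hw : 0 < w.im) {u : ℂ}
    (h : inK c w u) : u.im ≤ w.im + (∑ i, c i) / w.im := by
  have : u.im - w.im ≤ ‖u - w‖ := by
    calc u.im - w.im = (u - w).im := by simp
      _ ≤ |(u - w).im| := le_abs_self _
      _ ≤ ‖u - w‖ := Complex.abs_im_le_norm _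
  linarith [h.2]

lemma inK_mul_S_le {c : Fin M → ℝ} {w : ℂ} (hc : ∀ i, 0 ≤ c i) (hw : 0 < w.im)
    (p : Fin M → ℝ) {u : ℂ} (h : inK c w u) :
    u.im * S c p u ≤ (w.im + (∑ i, c i) / w.im) * ((∑ i, c i) / w.im ^ 2) := by
  have h1 := inK_im_le hc hw h
  have h2 := S_le p hc hw h.1
  have h3 := S_nonneg (p := p) hc u
  have h4 : 0 < u.im := lt_of_lt_of_le hw h.1
  have hW : 0 ≤ ∑ i, c i := Finset.sum_nonneg fun i _ => hc i
  exact mul_le_mul h1 h2 h3 (by positivity)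

noncomputable def iter (c p : Fin M → ℝ) (w : ℂ) : ℕ → ℂ
  | 0 => w
  | n + 1 => Th c p w (iter c p w n)

lemma fixed_point_exists (c p : Fin M → ℝ) (hc : ∀ i, 0 ≤ c i) (w : ℂ) (hw : 0 < w.im) :
    ∃ u : ℂ, 0 < u.im ∧ u = Th c p w u := by
  set t : ℝ := w.im with ht_def
  set W : ℝ := ∑ i, c i with hW_def
  have hW : 0 ≤ W := Finset.sum_nonneg fun i _ => hc i
  set A : ℝ := t + W / t with hA_def
  have hA : 0 < A := by positivity
  set C : ℝ := A * (W / t ^ 2) with hC_def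
  have hC : 0 ≤ C := by positivity
  have htC : 0 < t + C := by positivity
  set q : ℝ := C / (t + C) with hq_def
  have hq0 : 0 ≤ q := by positivity
  have hq1 : q < 1 := (div_lt_one htC).mpr (by linarith)
  -- the one-step contraction estimate
  have step : ∀ u v : ℂ, inK c w u → inK c w v →
      ‖Th c p w u - Th c p w v‖ ^ 2 * (u.im * v.im)
        ≤ q ^ 2 * (‖u - v‖ ^ 2 * ((Th c p w u).im * (Th c p w v).im)) := by
    intro u v hu hv
    have hu0 : 0 < u.im := lt_of_lt_of_le hw hu.1
    have hv0 : 0 < v.im := lt_of_lt_of_le hw hv.1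
    have hx : u.im * S c p u ≤ C := inK_mul_S_le hc hw p hu
    have hy : v.im * S c p v ≤ C := inK_mul_S_le hc hw p hv
    have hx0 : 0 ≤ u.im * S c p u := mul_nonneg hu0.le (S_nonneg hc u)
    have hy0 : 0 ≤ v.im * S c p v := mul_nonneg hv0.le (S_nonneg hc v)
    set x : ℝ := u.im * S c p u
    set y : ℝ := v.im * S c p v
    have hxy : x * y * (t + C) ^ 2 ≤ C ^ 2 * ((t + x) * (t + y)) := by
      have h1 : x * (t + C) ≤ C * (t + x) := by nlinarith
      have h2 : y * (t + C) ≤ C * (t + y) := by nlinarith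
      nlinarith [mul_le_mul h1 h2 (by positivity) (by positivity)]
    have hxyq : x * y ≤ q ^ 2 * ((t + x) * (t + y)) := by
      rw [hq_def, div_pow]
      rw [div_mul_eq_mul_div, le_div_iff₀ (by positivity)]
      linarith
    have hcc := contraction_core (p := p) hc hu0 hv0 w
    have hmul := mul_le_mul_of_nonneg_right hcc (mul_nonneg hu0.le hv0.le)
    rw [im_Th, im_Th]
    calc ‖Th c p w u - Th c p w v‖ ^ 2 * (u.im * v.im)
        ≤ ‖u - v‖ ^ 2 * (S c p u * S c p v) * (u.im * v.im) := hmul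
      _ = ‖u - v‖ ^ 2 * (x * y) := by ring
      _ ≤ ‖u - v‖ ^ 2 * (q ^ 2 * ((t + x) * (t + y))) :=
          mul_le_mul_of_nonneg_left hxyq (by positivity)
      _ = q ^ 2 * (‖u - v‖ ^ 2 * ((t + x) * (t + y))) := by ring
  -- the iteration sequence
  set seq : ℕ → ℂ := iter c p w with hseq_def
  have hseqS : ∀ n, seq (n + 1) = Th c p w (seq n) := fun n => rfl
  have hKn : ∀ n, inK c w (seq n) := by
    intro n
    induction n with
    | zero =>
        refine ⟨le_refl _, ?_⟩
        show ‖w - w‖ ≤ W / t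
        simp only [sub_self, norm_zero]
        positivity
    | succ n ih =>
        rw [hseqS]
        exact Th_mem_inK hc hw ih.1
  have him : ∀ n, 0 < (seq n).im := fun n => lt_of_lt_of_le hw (hKn n).1
  have himA : ∀ n, (seq n).im ≤ A := fun n => inK_im_le hc hw (hKn n)
  set E : ℕ → ℝ :=
    fun n => ‖seq (n + 1) - seq n‖ ^ 2 / ((seq (n + 1)).im * (seq n).im)
    with hE_def
  have hden : ∀ n, 0 < (seq (n + 1)).im * (seq n).im := fun n => mul_pos (him (n+1)) (him n)
  have hE0 : ∀ n, 0 ≤ E n := fun n => div_nonneg (by positivity) (hden n).le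
  have hEstep : ∀ n, E (n + 1) ≤ q ^ 2 * E n := by
    intro n
    have hs := step (seq (n + 1)) (seq n) (hKn (n+1)) (hKn n)
    rw [show Th c p w (seq (n+1)) = seq (n+2) from (hseqS (n+1)).symm,
      show Th c p w (seq n) = seq (n+1) from (hseqS n).symm] at hs
    show ‖seq (n + 2) - seq (n + 1)‖ ^ 2 / ((seq (n + 2)).im * (seq (n + 1)).im)
      ≤ q ^ 2 * (‖seq (n + 1) - seq n‖ ^ 2 / ((seq (n + 1)).im * (seq n).im))
    rw [mul_div_assoc', div_le_div_iff₀ (hden (n + 1)) (hden n)]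
    calc ‖seq (n + 2) - seq (n + 1)‖ ^ 2 * ((seq (n + 1)).im * (seq n).im)
        ≤ q ^ 2 * (‖seq (n + 1) - seq n‖ ^ 2 * ((seq (n + 2)).im * (seq (n + 1)).im)) := hs
      _ = q ^ 2 * ‖seq (n + 1) - seq n‖ ^ 2 * ((seq (n + 2)).im * (seq (n + 1)).im) := by ring
  have hEgeo : ∀ n, E n ≤ (q ^ n) ^ 2 * E 0 := by
    intro n
    induction n with
    | zero => simp
    | succ n ih =>
        calc E (n + 1) ≤ q ^ 2 * E n := hEstep n
          _ ≤ q ^ 2 * ((q ^ n) ^ 2 * E 0) := mul_le_mul_of_nonneg_left ih (by positivity)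
          _ = (q ^ (n + 1)) ^ 2 * E 0 := by ring
  have hdist : ∀ n, dist (seq n) (seq (n + 1)) ≤ Real.sqrt (E 0) * A * q ^ n := by
    intro n
    have habs2 : ‖seq (n + 1) - seq n‖ ^ 2
        = E n * ((seq (n + 1)).im * (seq n).im) := by
      exact (div_mul_cancel₀ _ (hden n).ne').symm
    have hAA : (seq (n + 1)).im * (seq n).im ≤ A * A :=
      mul_le_mul (himA (n+1)) (himA n) (him n).le (le_trans (him (n+1)).le (himA (n+1)))
    have hb : ‖seq (n + 1) - seq n‖ ^ 2 ≤ (Real.sqrt (E 0) * A * q ^ n) ^ 2 := by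
      rw [habs2]
      calc E n * ((seq (n + 1)).im * (seq n).im)
          ≤ ((q ^ n) ^ 2 * E 0) * (A * A) :=
            mul_le_mul (hEgeo n) hAA (hden n).le (mul_nonneg (sq_nonneg _) (hE0 0))
        _ = (Real.sqrt (E 0) * A * q ^ n) ^ 2 := by
            rw [mul_pow, mul_pow, Real.sq_sqrt (hE0 0)]
            ring
    have hrhs : 0 ≤ Real.sqrt (E 0) * A * q ^ n := by positivity
    rw [Complex.dist_eq]
    have habs_comm : ‖seq n - seq (n + 1)‖ = ‖seq (n + 1) - seq n‖ := by
      rw [← neg_sub, norm_neg]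
    rw [habs_comm]
    exact le_of_pow_le_pow_left₀ two_ne_zero hrhs hb
  have hcauchy : CauchySeq seq := cauchySeq_of_le_geometric q _ hq1 hdist
  obtain ⟨x, hx⟩ := cauchySeq_tendsto_of_complete hcauchy
  have hxim : w.im ≤ x.im := by
    have himtend : Tendsto (fun n => (seq n).im) atTop (𝓝 x.im) :=
      (Complex.continuous_im.tendsto x).comp hx
    exact ge_of_tendsto' himtend fun n => (hKn n).1
  have hx0 : 0 < x.im := lt_of_lt_of_le hw hxim
  have hsum : ContinuousAt (fun y : ℂ => ∑ i, (c i : ℂ) / (y - (p i : ℂ))) x :=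
    tendsto_finset_sum _ fun i _ =>
      ContinuousAt.div continuousAt_const
        (continuousAt_id.sub continuousAt_const) (sub_p_ne hx0 (p i))
  have hcont : ContinuousAt (Th c p w) x := continuousAt_const.sub hsum
  have h1 : Tendsto (fun n => seq (n + 1)) atTop (𝓝 x) := hx.comp (tendsto_add_atTop_nat 1)
  have h2 : Tendsto (fun n => Th c p w (seq n)) atTop (𝓝 (Th c p w x)) := hcont.tendsto.comp hx
  exact ⟨x, hx0, tendsto_nhds_unique h1 h2⟩



theorem scalar_existsUnique (c p : Fin M → ℝ) (hc : ∀ i, 0 ≤ c i) (w : ℂ) (hw : 0 < w.im) :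
    ∃! u : ℂ, 0 < u.im ∧ u = Th c p w u := by
  obtain ⟨u, hu, hfix⟩ := fixed_point_exists c p hc w hw
  exact ⟨u, ⟨hu, hfix⟩, fun v hv => fixed_point_unique hc hw hv.1 hu hv.2 hfix⟩


lemma neg_inv_im {m : ℂ} (hm : 0 < m.im) : 0 < (-m⁻¹).im := by
  have hm0 : m ≠ 0 := by intro h; rw [h] at hm; simp at hm
  rw [Complex.neg_im, Complex.inv_im, neg_div, neg_neg]
  exact div_pos hm (Complex.normSq_pos.mpr hm0)

lemma neg_inv_invol {m : ℂ} (hm : m ≠ 0) : -(-m⁻¹)⁻¹ = m := by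
  field_simp

lemma one_plus_ne {m : ℂ} (hm : 0 < m.im) (lam : ℝ) : (1 : ℂ) + m * (lam : ℂ) ≠ 0 := by
  rcases eq_or_ne lam 0 with h | h
  · simp [h]
  · intro hcon
    have : ((1 : ℂ) + m * (lam : ℂ)).im = 0 := by rw [hcon]; simp
    simp only [Complex.add_im, Complex.one_im, Complex.mul_im, Complex.ofReal_re,
      Complex.ofReal_im, zero_add, mul_zero, add_zero] at this
    have := mul_pos hm (abs_pos.mpr h)
    rcases lt_or_gt_of_ne h with h' | h' <;> nlinarith [hm, this]

lemma scalar_m (Nn : ℕ) (hN : 0 < Nn) (lam : Fin M → ℝ) (z : ℂ) (hz : 0 < z.im) :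
    ∃! m : ℂ, 0 < m.im ∧
      z = -1 / m + (1 / (Nn : ℂ)) * ∑ i, (lam i : ℂ) / (1 + m * (lam i : ℂ)) := by
  set c : Fin M → ℝ := fun i => lam i ^ 2 / Nn with hc_def
  have hc : ∀ i, 0 ≤ c i := fun i => by positivity
  set b : ℝ := (∑ i, lam i) / Nn with hb_def
  set w : ℂ := z - (b : ℂ) with hw_def
  have hw : 0 < w.im := by rw [hw_def]; simp [hz]
  have hN0 : (Nn : ℂ) ≠ 0 := Nat.cast_ne_zero.mpr hN.ne'
  -- the change of variables
  have hcond : ∀ m : ℂ, 0 < m.im →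
      ((z = -1 / m + (1 / (Nn : ℂ)) * ∑ i, (lam i : ℂ) / (1 + m * (lam i : ℂ)))
        ↔ -m⁻¹ = Th c lam w (-m⁻¹)) := by
    intro m hm
    have hm0 : m ≠ 0 := by intro h; rw [h] at hm; simp at hm
    have hu : 0 < (-m⁻¹).im := neg_inv_im hm
    set u : ℂ := -m⁻¹ with hu_def
    have hmu : m * u = -1 := by rw [hu_def]; field_simp
    have hterm : ∀ i : Fin M, (lam i : ℂ) / (1 + m * (lam i : ℂ))
        = (lam i : ℂ) + ((lam i : ℂ))^2 / (u - (lam i : ℂ)) := by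
      intro i
      have h1 := one_plus_ne hm (lam i)
      have h2 := sub_p_ne hu (lam i)
      rw [add_div' _ _ _ h2, div_eq_div_iff h1 h2]
      linear_combination (-(lam i : ℂ) ^ 2) * hmu
    have hsum : (1 / (Nn : ℂ)) * ∑ i, (lam i : ℂ) / (1 + m * (lam i : ℂ))
        = (b : ℂ) + ∑ i, (c i : ℂ) / (u - (lam i : ℂ)) := by
      rw [Finset.sum_congr rfl fun i _ => hterm i, Finset.sum_add_distrib, mul_add,
        Finset.mul_sum, Finset.mul_sum]
      congr 1
      · rw [hb_def]
        push_cast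
        rw [Finset.sum_div]
        refine Finset.sum_congr rfl fun i _ => by ring
      · refine Finset.sum_congr rfl fun i _ => ?_
        rw [hc_def]
        push_cast
        ring
    have hneg : -1 / m = u := by rw [hu_def]; field_simp
    rw [hsum, hneg, Th]
    constructor
    · intro h; rw [hw_def]; linear_combination -h
    · intro h; rw [hw_def] at h; linear_combination -h
  obtain ⟨u₀, ⟨hu₀, hfix₀⟩, huniq⟩ := scalar_existsUnique c lam hc w hw
  have hu₀0 : u₀ ≠ 0 := by intro h; rw [h] at hu₀; simp at hu₀
  refine ⟨-u₀⁻¹, ⟨neg_inv_im hu₀, ?_⟩, ?_⟩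
  · have hinv : -(-u₀⁻¹)⁻¹ = u₀ := neg_inv_invol hu₀0
    rw [hcond _ (neg_inv_im hu₀), hinv]
    exact hfix₀
  · rintro m ⟨hm, heq⟩
    have hm0 : m ≠ 0 := by intro h; rw [h] at hm; simp at hm
    have h1 : -m⁻¹ = u₀ := huniq _ ⟨neg_inv_im hm, (hcond m hm).mp heq⟩
    rw [← h1, neg_inv_invol hm0]


lemma isHermitian_map {F : Matrix (Fin M) (Fin M) ℝ} (hF : F.IsSymm) :
    (F.map ((↑) : ℝ → ℂ)).IsHermitian := by
  ext i j
  simp only [conjTranspose_apply, Matrix.map_apply, RCLike.star_def, Complex.conj_ofReal]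
  rw [hF.apply]

lemma matrix_key {F : Matrix (Fin M) (Fin M) ℝ} (hF : F.IsSymm) {m : ℂ} (hm : 0 < m.im) :
    IsUnit (1 + m • F.map ((↑) : ℝ → ℂ)) ∧
      (F.map ((↑) : ℝ → ℂ) * (1 + m • F.map ((↑) : ℝ → ℂ))⁻¹).trace
        = ∑ i, ((isHermitian_map hF).eigenvalues i : ℂ)
            / (1 + m * ((isHermitian_map hF).eigenvalues i : ℂ)) := by
  set G : Matrix (Fin M) (Fin M) ℂ := F.map ((↑) : ℝ → ℂ) with hG_def
  have hG : G.IsHermitian := isHermitian_map hF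
  set lam : Fin M → ℝ := hG.eigenvalues with hlam_def
  set U : Matrix (Fin M) (Fin M) ℂ := (Matrix.IsHermitian.eigenvectorUnitary hG : Matrix (Fin M) (Fin M) ℂ) with hU_def
  have hUU : U * star U = 1 :=
    (Matrix.mem_unitaryGroup_iff).mp (Matrix.IsHermitian.eigenvectorUnitary hG).2
  have hUU' : star U * U = 1 :=
    (Matrix.mem_unitaryGroup_iff').mp (Matrix.IsHermitian.eigenvectorUnitary hG).2
  set d : Fin M → ℂ := fun i => 1 + m * (lam i : ℂ) with hd_def
  have hd : ∀ i, d i ≠ 0 := fun i => one_plus_ne hm (lam i)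
  have hD0 : diagonal (RCLike.ofReal ∘ lam) = diagonal (fun i => ((lam i : ℂ))) := rfl
  have hspec : G = U * diagonal (fun i => ((lam i : ℂ))) * star U := by
    rw [← hD0]; exact hG.spectral_theorem
  have e : (m • fun i => ((lam i : ℂ))) = fun i => m * (lam i : ℂ) := by
    funext i; simp [smul_eq_mul]
  have hsm : m • G = U * diagonal (fun i => m * (lam i : ℂ)) * star U := by
    rw [hspec, ← Matrix.smul_mul, ← Matrix.mul_smul, ← Matrix.diagonal_smul, e]
  have hdecomp : 1 + m • G = U * diagonal d * star U := by
    have h1 : (1 : Matrix (Fin M) (Fin M) ℂ) = U * 1 * star U := by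
      rw [Matrix.mul_one, hUU]
    rw [hsm, h1, ← Matrix.add_mul, ← Matrix.mul_add]
    congr 1
    congr 1
    rw [hd_def, ← Matrix.diagonal_one, Matrix.diagonal_add]
  have hDunit : IsUnit (diagonal d) := by
    rw [Matrix.isUnit_iff_isUnit_det, Matrix.det_diagonal, isUnit_iff_ne_zero]
    exact Finset.prod_ne_zero_iff.mpr fun i _ => hd i
  have hUunit : IsUnit U := by
    rw [Matrix.isUnit_iff_isUnit_det]
    have := congrArg Matrix.det hUU
    rw [Matrix.det_mul, Matrix.det_one] at this
    exact IsUnit.of_mul_eq_one _ this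
  have hUstarunit : IsUnit (star U) := by
    rw [Matrix.isUnit_iff_isUnit_det]
    have := congrArg Matrix.det hUU'
    rw [Matrix.det_mul, Matrix.det_one] at this
    exact IsUnit.of_mul_eq_one _ this
  have hunit : IsUnit (1 + m • G) := by
    rw [hdecomp]
    exact (hUunit.mul hDunit).mul hUstarunit
  refine ⟨hunit, ?_⟩
  have hdiaginv : (diagonal d)⁻¹ = diagonal (fun i => (d i)⁻¹) := by
    refine Matrix.inv_eq_right_inv ?_
    rw [Matrix.diagonal_mul_diagonal,
      show (fun i => d i * (d i)⁻¹) = (fun _ => (1 : ℂ)) from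
        funext fun i => mul_inv_cancel₀ (hd i),
      Matrix.diagonal_one]
  have hinv : (1 + m • G)⁻¹ = U * diagonal (fun i => (d i)⁻¹) * star U := by
    rw [hdecomp, Matrix.mul_inv_rev, Matrix.mul_inv_rev]
    rw [Matrix.inv_eq_left_inv hUU (A := star U), Matrix.inv_eq_left_inv hUU' (A := U), hdiaginv]
    rw [Matrix.mul_assoc]
  rw [hinv, ← hG_def, hspec]
  have : U * diagonal (fun i => ((lam i : ℂ))) * star U * (U * diagonal (fun i => (d i)⁻¹) * star U)
      = U * (diagonal (fun i => ((lam i : ℂ))) * diagonal (fun i => (d i)⁻¹)) * star U := by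
    simp only [Matrix.mul_assoc]
    rw [← Matrix.mul_assoc (star U) U, hUU', Matrix.one_mul]
  rw [this, Matrix.diagonal_mul_diagonal]
  rw [Matrix.trace_mul_comm, ← Matrix.mul_assoc, hUU', Matrix.one_mul, Matrix.trace_diagonal]
  exact Finset.sum_congr rfl fun i _ => (div_eq_mul_inv _ _).symm


end MPaux

/-- For a symmetric `F ∈ ℝ^{M×M}` and every `z` in the upper half-plane,
there is a unique `m` in the upper half-plane with `Id + m • F` invertible and
`z = -1/m + (1/N) Tr(F (Id + m F)⁻¹)` (the finite-`N` Marcenko–Pastur equation). -/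
theorem marcenko_pastur_existence_uniqueness
    (N M : ℕ) (hN : 0 < N) (hM : 0 < M)
    (F : Matrix (Fin M) (Fin M) ℝ) (hF : F.IsSymm) :
    ∀ z : ℂ, 0 < z.im →
      ∃! m : ℂ, 0 < m.im ∧
        IsUnit (1 + m • F.map ((↑) : ℝ → ℂ)) ∧
        z = -1 / m + (1 / (N : ℂ)) *
          (F.map ((↑) : ℝ → ℂ) * (1 + m • F.map ((↑) : ℝ → ℂ))⁻¹).trace := by
  intro z hz
  obtain ⟨m₀, ⟨hm₀, heq₀⟩, huniq⟩ :=
    MPaux.scalar_m N hN (MPaux.isHermitian_map hF).eigenvalues z hz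
  refine ⟨m₀, ⟨hm₀, (MPaux.matrix_key hF hm₀).1, ?_⟩, ?_⟩
  · rw [(MPaux.matrix_key hF hm₀).2]
    exact heq₀
  · rintro m ⟨h1, _, h3⟩
    refine huniq m ⟨h1, ?_⟩
    rw [(MPaux.matrix_key hF h1).2] at h3
    exact h3
end

section
/- Let n, p, k, N, m_1, …, m_k be positive integers, B ∈ ℝ^{n×n} symmetric, U_r ∈ ℝ^{n×m_r}, σ_r ≥ 0, and Σ_r = σ_r²·Id_p + V_rΘ_rV_r' where V_r ∈ ℝ^{p×l_r} has orthonormal columns and Θ_r ∈ ℝ^{l_r×l_r} is diagonal. Set M = m_1+⋯+m_k, W = [σ_1U_1, …, σ_kU_k] ∈ ℝ^{n×M}, F = N·W'BW. Let z, m ∈ ℂ with m ≠ 0, Id_M + mF invertible, and z = −1/m + (1/N)·Tr(F(Id_M + mF)^{−1}), and define t_r = Tr(U_r'BU_r) − m·N·Tr(U_r'BW(Id_M + mF)^{−1}W'BU_r) and T(z) = z·Id_p − Σ_{r=1}^k t_r·Σ_r. Then every vector v ∈ ℂ^p with T(z)·v = 0 lies in the combined column span S of V_1, …, V_k. -/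
open Matrix

private lemma sum_mulVec' {ι n m : Type*} [Fintype n] (s : Finset ι)
    (f : ι → Matrix m n ℂ) (v : n → ℂ) :
    (∑ i ∈ s, f i) *ᵥ v = ∑ i ∈ s, f i *ᵥ v := by
  funext j
  simp only [Matrix.mulVec, dotProduct, Finset.sum_apply, Matrix.sum_apply,
    Finset.sum_mul]
  rw [Finset.sum_comm]

private lemma mapC_mul {a b c : Type*} [Fintype b] (A : Matrix a b ℝ) (C : Matrix b c ℝ) :
    ((A * C).map ((↑) : ℝ → ℂ)) = (A.map ((↑) : ℝ → ℂ)) * (C.map ((↑) : ℝ → ℂ)) := by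
  ext i j; simp [Matrix.mul_apply, Matrix.map_apply]

/-- Proposition 2.4(b): every vector in the kernel of
`T(z) = z·Id − Σ_r t_r Σ_r` lies in the combined column span of `V_1, …, V_k`. -/
theorem kernel_of_T_subset_span
    (n p k N : ℕ) (hn : 0 < n) (hp : 0 < p) (hk : 0 < k) (hN : 0 < N)
    (m_ : Fin k → ℕ) (hm : ∀ r, 0 < m_ r)
    (B : Matrix (Fin n) (Fin n) ℝ) (hB : B.IsSymm)
    (U : (r : Fin k) → Matrix (Fin n) (Fin (m_ r)) ℝ)
    (σ : Fin k → ℝ) (hσ : ∀ r, 0 ≤ σ r)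
    (l : Fin k → ℕ)
    (V : (r : Fin k) → Matrix (Fin p) (Fin (l r)) ℝ)
    (hV : ∀ r, (V r)ᵀ * V r = 1)
    (Θ : (r : Fin k) → Matrix (Fin (l r)) (Fin (l r)) ℝ)
    (hΘ : ∀ r, (Θ r).IsDiag)
    (Sig : (r : Fin k) → Matrix (Fin p) (Fin p) ℝ)
    (hSig : ∀ r, Sig r = (σ r) ^ 2 • (1 : Matrix (Fin p) (Fin p) ℝ) + V r * Θ r * (V r)ᵀ)
    (W : Matrix (Fin n) ((r : Fin k) × Fin (m_ r)) ℝ)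
    (hW : ∀ i a, W i a = σ a.1 * U a.1 i a.2)
    (F : Matrix ((r : Fin k) × Fin (m_ r)) ((r : Fin k) × Fin (m_ r)) ℂ)
    (hF : F = (N : ℂ) • ((Wᵀ * B * W).map ((↑) : ℝ → ℂ)))
    (z m : ℂ) (hm0 : m ≠ 0)
    (hinv : IsUnit (1 + m • F))
    (hMP : z = -1 / m + (1 / (N : ℂ)) * (F * (1 + m • F)⁻¹).trace)
    (t : Fin k → ℂ)
    (ht : ∀ r, t r = (((U r)ᵀ * B * U r).map ((↑) : ℝ → ℂ)).trace
        - m * N * (((U r)ᵀ * B * W).map ((↑) : ℝ → ℂ) * (1 + m • F)⁻¹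
            * ((Wᵀ * B * U r).map ((↑) : ℝ → ℂ))).trace)
    (T : Matrix (Fin p) (Fin p) ℂ)
    (hT : T = z • (1 : Matrix (Fin p) (Fin p) ℂ) - ∑ r, t r • (Sig r).map ((↑) : ℝ → ℂ)) :
    ∀ v : Fin p → ℂ, T.mulVec v = 0 →
      v ∈ Submodule.span ℂ
        {w : Fin p → ℂ | ∃ (r : Fin k) (j : Fin (l r)), w = fun i => ((V r i j : ℝ) : ℂ)} := by
  intro v hv
  have hNC : (N : ℂ) ≠ 0 := Nat.cast_ne_zero.mpr hN.ne'
  set H := (1 + m • F)⁻¹ with hH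
  have hdet := (Matrix.isUnit_iff_isUnit_det _).mp hinv
  have hHl : H * (1 + m • F) = 1 := Matrix.nonsing_inv_mul _ hdet
  set G := (Wᵀ * B * W).map ((↑) : ℝ → ℂ) with hG
  set C : (r : Fin k) → Matrix (Fin (m_ r)) ((s : Fin k) × Fin (m_ s)) ℂ :=
    fun r => ((U r)ᵀ * B * W).map ((↑) : ℝ → ℂ) with hC
  set D : (r : Fin k) → Matrix ((s : Fin k) × Fin (m_ s)) (Fin (m_ r)) ℂ :=
    fun r => (Wᵀ * B * (U r)).map ((↑) : ℝ → ℂ) with hD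
  -- entrywise descriptions of G
  have hGC : ∀ (r : Fin k) (j : Fin (m_ r)) b, G ⟨r, j⟩ b = (σ r : ℂ) * C r j b := by
    intro r j b
    simp only [hG, hC, Matrix.map_apply, Matrix.mul_apply, Matrix.transpose_apply, hW]
    push_cast
    rw [Finset.mul_sum]
    refine Finset.sum_congr rfl fun x _ => ?_
    rw [Finset.sum_mul, Finset.sum_mul, Finset.mul_sum]
    refine Finset.sum_congr rfl fun y _ => ?_
    ring
  have hGD : ∀ (r : Fin k) b (j : Fin (m_ r)), G b ⟨r, j⟩ = (σ r : ℂ) * D r b j := by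
    intro r b j
    simp only [hG, hD, Matrix.map_apply, Matrix.mul_apply, Matrix.transpose_apply, hW]
    push_cast
    rw [Finset.mul_sum]
    refine Finset.sum_congr rfl fun x _ => ?_
    rw [Finset.sum_mul, Finset.sum_mul, Finset.mul_sum]
    refine Finset.sum_congr rfl fun y _ => ?_
    ring
  have hCU : ∀ (r : Fin k) (j j' : Fin (m_ r)),
      C r j ⟨r, j'⟩ = (σ r : ℂ) * (((U r)ᵀ * B * (U r)).map ((↑) : ℝ → ℂ)) j j' := by
    intro r j j'
    simp only [hC, Matrix.map_apply, Matrix.mul_apply, Matrix.transpose_apply, hW]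
    push_cast
    rw [Finset.mul_sum]
    refine Finset.sum_congr rfl fun x _ => ?_
    ring
  -- trace identities
  have htr1 : G.trace = ∑ r, (σ r : ℂ) ^ 2 * (((U r)ᵀ * B * (U r)).map ((↑) : ℝ → ℂ)).trace := by
    simp only [Matrix.trace, Matrix.diag]
    rw [← Finset.univ_sigma_univ, Finset.sum_sigma]
    refine Finset.sum_congr rfl fun r _ => ?_
    rw [Finset.mul_sum]
    refine Finset.sum_congr rfl fun j _ => ?_
    rw [hGC r j ⟨r, j⟩, hCU r j j]
    ring
  have hGH : ∀ (r : Fin k) (j : Fin (m_ r)) a, (G * H) ⟨r, j⟩ a = (σ r : ℂ) * (C r * H) j a := by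
    intro r j a
    simp only [Matrix.mul_apply]
    rw [Finset.mul_sum]
    refine Finset.sum_congr rfl fun b _ => ?_
    rw [hGC]; ring
  have htr2 : (G * H * G).trace = ∑ r, (σ r : ℂ) ^ 2 * (C r * H * D r).trace := by
    simp only [Matrix.trace, Matrix.diag]
    rw [← Finset.univ_sigma_univ, Finset.sum_sigma]
    refine Finset.sum_congr rfl fun r _ => ?_
    rw [Finset.mul_sum]
    refine Finset.sum_congr rfl fun j _ => ?_
    simp only [Matrix.mul_apply (M := G * H)]
    simp only [Matrix.mul_apply (M := C r * H)]
    rw [Finset.mul_sum]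
    refine Finset.sum_congr rfl fun a _ => ?_
    rw [hGH r j a, hGD r a j]
    simp only [Matrix.mul_apply]
    ring
  -- the resolvent identity
  have key : F * H = F - m • (F * H * F) := by
    have h1 : F * H * (1 + m • F) = F := by
      rw [Matrix.mul_assoc, hHl, Matrix.mul_one]
    have h2 : F * H * (1 + m • F) = F * H + m • (F * H * F) := by
      rw [Matrix.mul_add, Matrix.mul_one, Matrix.mul_smul]
    rw [h2] at h1
    linear_combination (norm := module) h1
  have htrFH : (F * H).trace = (N : ℂ) * G.trace - m * (N : ℂ) ^ 2 * (G * H * G).trace := by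
    rw [key, hF]
    simp only [Matrix.smul_mul, Matrix.mul_smul, Matrix.trace_sub, Matrix.trace_smul,
      smul_smul, smul_eq_mul]
    ring
  -- the scalar identity:  z - ∑ σ² t = -1/m
  have hsum : ∑ r, (σ r : ℂ) ^ 2 * t r = G.trace - m * (N : ℂ) * (G * H * G).trace := by
    have : ∑ r, (σ r : ℂ) ^ 2 * t r
        = ∑ r, ((σ r : ℂ) ^ 2 * (((U r)ᵀ * B * (U r)).map ((↑) : ℝ → ℂ)).trace
            - m * (N : ℂ) * ((σ r : ℂ) ^ 2 * (C r * H * D r).trace)) := by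
      refine Finset.sum_congr rfl fun r _ => ?_
      rw [ht r]; ring
    rw [this, Finset.sum_sub_distrib, ← Finset.mul_sum, ← htr1, ← htr2]
  have hc : z - ∑ r, (σ r : ℂ) ^ 2 * t r = -1 / m := by
    rw [hMP, hsum, htrFH]
    field_simp
    ring
  -- rewrite the kernel equation
  have hSigmap : ∀ r, (Sig r).map ((↑) : ℝ → ℂ)
      = ((σ r : ℂ)) ^ 2 • (1 : Matrix (Fin p) (Fin p) ℂ)
        + (V r * Θ r * (V r)ᵀ).map ((↑) : ℝ → ℂ) := by
    intro r
    ext i j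
    by_cases h : i = j <;>
      simp [hSig, Matrix.map_apply, Matrix.one_apply, h] <;> push_cast <;> ring
  have h2 : z • v - ∑ r, t r • ((σ r : ℂ) ^ 2 • v
      + ((V r * Θ r * (V r)ᵀ).map ((↑) : ℝ → ℂ)) *ᵥ v) = 0 := by
    rw [hT] at hv
    rw [Matrix.sub_mulVec, Matrix.smul_mulVec, Matrix.one_mulVec, sum_mulVec'] at hv
    rw [← hv]
    congr 1
    refine Finset.sum_congr rfl fun r _ => ?_
    rw [Matrix.smul_mulVec, hSigmap r, Matrix.add_mulVec, Matrix.smul_mulVec,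
      Matrix.one_mulVec]
  have h3 : (z - ∑ r, (σ r : ℂ) ^ 2 * t r) • v
      = ∑ r, t r • (((V r * Θ r * (V r)ᵀ).map ((↑) : ℝ → ℂ)) *ᵥ v) := by
    funext i
    have h2i := congrFun h2 i
    simp only [Pi.sub_apply, Pi.smul_apply, Pi.add_apply, Finset.sum_apply, smul_eq_mul,
      Pi.zero_apply] at h2i ⊢
    have e1 : (∑ r, (σ r : ℂ) ^ 2 * t r) * v i = ∑ r, (σ r : ℂ) ^ 2 * t r * v i :=
      Finset.sum_mul _ _ _
    have e2 : ∑ r, t r * ((σ r : ℂ) ^ 2 * v i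
          + (((V r * Θ r * (V r)ᵀ).map ((↑) : ℝ → ℂ)) *ᵥ v) i)
        = ∑ r, ((σ r : ℂ) ^ 2 * t r * v i)
          + ∑ r, t r * (((V r * Θ r * (V r)ᵀ).map ((↑) : ℝ → ℂ)) *ᵥ v) i := by
      rw [← Finset.sum_add_distrib]
      refine Finset.sum_congr rfl fun r _ => ?_
      ring
    linear_combination h2i + e2 - e1
  -- conclude membership
  set S := Submodule.span ℂ
      {w : Fin p → ℂ | ∃ (r : Fin k) (j : Fin (l r)), w = fun i => ((V r i j : ℝ) : ℂ)} with hS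
  have hmem : ∀ (r : Fin k) (w : Fin (l r) → ℂ), ((V r).map ((↑) : ℝ → ℂ)) *ᵥ w ∈ S := by
    intro r w
    have : ((V r).map ((↑) : ℝ → ℂ)) *ᵥ w
        = ∑ j, w j • (fun i => ((V r i j : ℝ) : ℂ)) := by
      funext i
      simp [Matrix.mulVec, dotProduct, Finset.sum_apply, Matrix.map_apply, mul_comm]
    rw [this]
    exact Submodule.sum_mem _ fun j _ =>
      Submodule.smul_mem _ _ (Submodule.subset_span ⟨r, j, rfl⟩)
  have hPmem : ∀ r, (((V r * Θ r * (V r)ᵀ).map ((↑) : ℝ → ℂ)) *ᵥ v) ∈ S := by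
    intro r
    have hsplit : (V r * Θ r * (V r)ᵀ).map ((↑) : ℝ → ℂ)
        = ((V r).map ((↑) : ℝ → ℂ)) * ((Θ r * (V r)ᵀ).map ((↑) : ℝ → ℂ)) := by
      rw [Matrix.mul_assoc, mapC_mul]
    rw [hsplit, ← Matrix.mulVec_mulVec]
    exact hmem r _
  have hvS : v = (-m) • ∑ r, t r • (((V r * Θ r * (V r)ᵀ).map ((↑) : ℝ → ℂ)) *ᵥ v) := by
    rw [← h3, hc, smul_smul]
    have : -m * (-1 / m) = 1 := by field_simp
    rw [this, one_smul]
  rw [hvS]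
  exact Submodule.smul_mem _ _ (Submodule.sum_mem _ fun r _ => Submodule.smul_mem _ _ (hPmem r))
end

section
/- Let μ0 be a probability measure on ℝ, let N, M, k, n, m_1, …, m_k, p be positive integers, B ∈ ℝ^{n×n} symmetric, U_r ∈ ℝ^{n×m_r}, σ_r ≥ 0, W = [σ_1U_1, …, σ_kU_k] ∈ ℝ^{n×M}, F = N·W'BW, and let Σ_1, …, Σ_k ∈ ℝ^{p×p} be positive semidefinite. For λ ∈ ℝ∖supp(μ0) set m0(λ) = ∫_ℝ (x − λ)^{−1} dμ0(x), and assume that for every λ ∈ ℝ∖supp(μ0) the matrix Id_M + m0(λ)F is invertible and λ = −1/m0(λ) + (1/N)·Tr(F(Id_M + m0(λ)F)^{−1}). Define t_r(λ) = Tr(U_r'BU_r) − m0(λ)·N·Tr(U_r'BW(Id_M + m0(λ)F)^{−1}W'BU_r) and T(λ) = λ·Id_p − Σ_{r=1}^k t_r(λ)·Σ_r. Then λ ↦ T(λ) is differentiable on ℝ∖supp(μ0), and for every λ ∈ ℝ∖supp(μ0) the symmetric matrix T'(λ) − Id_p is positive semidefinite. -/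
open Matrix MeasureTheory

/-- The closed support of a measure on `ℝ`:
`{x : μ([x−ε, x+ε]) > 0 for all ε > 0}`. -/
def msupp (μ : Measure ℝ) : Set ℝ := {x : ℝ | ∀ ε > 0, 0 < μ (Metric.ball x ε)}

attribute [local instance] Matrix.linftyOpNormedRing Matrix.linftyOpNormedAlgebra

/-- Differentiation of the Stieltjes transform off the support. -/
lemma m0_hasDerivAt (μ0 : Measure ℝ) [IsProbabilityMeasure μ0] {lam : ℝ}
    (h : lam ∉ msupp μ0) :
    HasDerivAt (fun l => ∫ x, (x - l)⁻¹ ∂μ0) (∫ x, ((x - lam) ^ 2)⁻¹ ∂μ0) lam := by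
  simp only [msupp, Set.mem_setOf_eq, not_forall, not_lt, exists_prop] at h
  obtain ⟨ε, εpos, hε⟩ := h
  have hε0 : μ0 (Metric.ball lam ε) = 0 := le_antisymm hε zero_le
  have hae : ∀ᵐ x ∂μ0, x ∉ Metric.ball lam ε := measure_eq_zero_iff_ae_notMem.1 hε0
  have hdist : ∀ᵐ x ∂μ0, ∀ l ∈ Metric.ball lam (ε / 2), ε / 2 ≤ |x - l| := by
    filter_upwards [hae] with x hx l hl
    rw [Metric.mem_ball, Real.dist_eq, not_lt] at hx
    rw [Metric.mem_ball, Real.dist_eq] at hl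
    have : |x - lam| ≤ |x - l| + |l - lam| := by
      calc |x - lam| = |(x - l) + (l - lam)| := by ring_nf
        _ ≤ |x - l| + |l - lam| := abs_add_le _ _
    linarith
  have key := hasDerivAt_integral_of_dominated_loc_of_deriv_le
    (F := fun l x => (x - l)⁻¹) (F' := fun l x => ((x - l) ^ 2)⁻¹)
    (bound := fun _ => ((ε / 2) ^ 2)⁻¹) (μ := μ0) (x₀ := lam)
    (Metric.ball_mem_nhds lam (half_pos εpos))
    (Filter.Eventually.of_forall fun l =>
      ((measurable_id.sub_const l).inv).aestronglyMeasurable)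
    ?_ (((measurable_id.sub_const lam).pow_const 2).inv.aestronglyMeasurable) ?_
    (integrable_const _) ?_
  · exact key.2
  · -- integrability of F lam
    refine Integrable.mono' (integrable_const ε⁻¹)
      ((measurable_id.sub_const lam).inv).aestronglyMeasurable ?_
    filter_upwards [hae] with x hx
    rw [Metric.mem_ball, Real.dist_eq, not_lt] at hx
    rw [Real.norm_eq_abs, abs_inv]
    exact inv_anti₀ εpos hx
  · -- bound
    filter_upwards [hdist] with x hx l hl
    have h2 := hx l hl
    have hsq : (ε / 2) ^ 2 ≤ (x - l) ^ 2 := by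
      rw [← sq_abs (x - l)]
      exact pow_le_pow_left₀ (by positivity) h2 2
    rw [Real.norm_eq_abs, abs_of_nonneg (inv_nonneg.2 (sq_nonneg _))]
    exact inv_anti₀ (by positivity) hsq
  · -- differentiability
    filter_upwards [hdist] with x hx l hl
    have hne : x - l ≠ 0 := by
      have := hx l hl
      intro h0
      rw [h0, abs_zero] at this
      linarith
    have h1 : HasDerivAt (fun l : ℝ => x - l) (-1) l := by
      simpa using (hasDerivAt_id l).const_sub x
    have := h1.inv hne
    refine this.congr_deriv ?_
    field_simp

lemma trace_mul_transpose_nonneg {a b : Type*} [Fintype a] [Fintype b]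
    (M : Matrix a b ℝ) : 0 ≤ (M * Mᵀ).trace := by
  rw [Matrix.trace]
  refine Finset.sum_nonneg fun i _ => ?_
  rw [Matrix.diag_apply, Matrix.mul_apply]
  exact Finset.sum_nonneg fun j _ => by
    simp only [Matrix.transpose_apply]; exact mul_self_nonneg _

lemma posSemidef_smul_of_nonneg {a : Type*} [Fintype a] {M : Matrix a a ℝ}
    (hM : M.PosSemidef) {c : ℝ} (hc : 0 ≤ c) : (c • M).PosSemidef := by
  refine ⟨?_, fun x => ?_⟩
  · simp [Matrix.IsHermitian, Matrix.conjTranspose_smul, hM.1.eq]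
    rw [show Mᵀ = Mᴴ from rfl, hM.1.eq]
  · exact (hM.smul hc).2 x

/-- Derivative of `s ↦ (1 + s • F)⁻¹` at a point where the matrix is invertible. -/
lemma hasDerivAt_one_add_smul_inv {ι : Type*} [Fintype ι] [DecidableEq ι]
    (F : Matrix ι ι ℝ) (s0 : ℝ) (h : IsUnit (1 + s0 • F)) :
    HasDerivAt (fun s : ℝ => (1 + s • F)⁻¹)
      (-((1 + s0 • F)⁻¹ * F * (1 + s0 • F)⁻¹)) s0 := by
  have h1 : HasDerivAt (fun s : ℝ => 1 + s • F) F s0 := by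
    have := ((hasDerivAt_id s0).smul_const F).const_add (1 : Matrix ι ι ℝ)
    rwa [one_smul] at this
  have h2 := (hasFDerivAt_ringInverse (𝕜 := ℝ) h.unit)
  rw [h.unit_spec] at h2
  have h3 := h2.comp_hasDerivAt s0 h1
  have hinv : (↑h.unit⁻¹ : Matrix ι ι ℝ) = (1 + s0 • F)⁻¹ := by
    rw [← Ring.inverse_unit h.unit, h.unit_spec, ← Matrix.nonsing_inv_eq_ringInverse]
  have heq : (fun s : ℝ => Ring.inverse (1 + s • F)) = fun s : ℝ => (1 + s • F)⁻¹ := by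
    funext s; rw [Matrix.nonsing_inv_eq_ringInverse]
  rw [Function.comp_def, heq] at h3
  refine h3.congr_deriv ?_
  simp [hinv]

lemma posSemidef_sum {a ι : Type*} [Fintype a] (s : Finset ι)
    (f : ι → Matrix a a ℝ) (h : ∀ i ∈ s, (f i).PosSemidef) :
    (∑ i ∈ s, f i).PosSemidef := by
  classical
  induction s using Finset.induction with
  | empty => simpa using Matrix.PosSemidef.zero
  | insert _ _ hx ih =>
      rw [Finset.sum_insert hx]
      exact (h _ (Finset.mem_insert_self _ _)).add
        (ih fun i hi => h i (Finset.mem_insert_of_mem hi))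

/-- Proposition 2.4(c): `λ ↦ T(λ)` is differentiable on `ℝ ∖ supp(μ0)`
and `T'(λ) − Id` is positive semidefinite there. -/
theorem derivative_of_T_minus_id_posSemidef
    (μ0 : Measure ℝ) (hμ0 : IsProbabilityMeasure μ0)
    (N M k n p : ℕ) (hN : 0 < N) (hM : 0 < M) (hk : 0 < k) (hn : 0 < n) (hp : 0 < p)
    (m_ : Fin k → ℕ) (hm : ∀ r, 0 < m_ r)
    (B : Matrix (Fin n) (Fin n) ℝ) (hB : B.IsSymm)
    (U : (r : Fin k) → Matrix (Fin n) (Fin (m_ r)) ℝ)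
    (σ : Fin k → ℝ) (hσ : ∀ r, 0 ≤ σ r)
    (W : Matrix (Fin n) ((r : Fin k) × Fin (m_ r)) ℝ)
    (hW : ∀ i a, W i a = σ a.1 * U a.1 i a.2)
    (F : Matrix ((r : Fin k) × Fin (m_ r)) ((r : Fin k) × Fin (m_ r)) ℝ)
    (hF : F = (N : ℝ) • (Wᵀ * B * W))
    (Sig : (r : Fin k) → Matrix (Fin p) (Fin p) ℝ)
    (hSig : ∀ r, (Sig r).PosSemidef)
    (m0 : ℝ → ℝ) (hm0 : ∀ lam, m0 lam = ∫ x, (x - lam)⁻¹ ∂μ0)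
    (hMP : ∀ lam ∉ msupp μ0,
      IsUnit (1 + m0 lam • F) ∧
      lam = -1 / m0 lam + (1 / (N : ℝ)) * (F * (1 + m0 lam • F)⁻¹).trace)
    (t : Fin k → ℝ → ℝ)
    (ht : ∀ r lam, t r lam = ((U r)ᵀ * B * U r).trace
        - m0 lam * N * ((U r)ᵀ * B * W * (1 + m0 lam • F)⁻¹ * (Wᵀ * B * U r)).trace)
    (T : ℝ → Matrix (Fin p) (Fin p) ℝ)
    (hT : ∀ lam, T lam = lam • (1 : Matrix (Fin p) (Fin p) ℝ) - ∑ r, t r lam • Sig r) :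
    ∃ T' : ℝ → Matrix (Fin p) (Fin p) ℝ,
      ∀ lam ∉ msupp μ0,
        (∀ i j, HasDerivAt (fun l => T l i j) (T' lam i j) lam) ∧
        (T' lam - 1).PosSemidef := by
    classical
  haveI := hμ0
  set d : ℝ → ℝ := fun lam => ∫ x, ((x - lam) ^ 2)⁻¹ ∂μ0 with hd_def
  have hd_nonneg : ∀ lam : ℝ, 0 ≤ d lam :=
    fun lam => integral_nonneg fun x => by positivity
  set G : ℝ → Matrix ((r : Fin k) × Fin (m_ r)) ((r : Fin k) × Fin (m_ r)) ℝ :=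
    fun lam => (1 + m0 lam • F)⁻¹ with hG_def
  set t' : Fin k → ℝ → ℝ := fun r lam =>
    -(d lam) * ((N : ℝ) *
      (((U r)ᵀ * B * W) * (G lam * G lam) * ((U r)ᵀ * B * W)ᵀ).trace) with ht'_def
  refine ⟨fun lam => 1 - ∑ r, t' r lam • Sig r, fun lam hlam => ?_⟩
  obtain ⟨hunit, -⟩ := hMP lam hlam
  -- symmetry facts
  have hFt : Fᵀ = F := by
    rw [hF]
    simp [Matrix.transpose_smul, Matrix.transpose_mul, Matrix.mul_assoc, hB.eq]
  have hOneAdd_t : (1 + m0 lam • F)ᵀ = 1 + m0 lam • F := by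
    simp [Matrix.transpose_add, Matrix.transpose_smul, hFt]
  have hGt : (G lam)ᵀ = G lam := by
    rw [hG_def]
    simp only []
    rw [Matrix.transpose_nonsing_inv, hOneAdd_t]
  have hdetu : IsUnit (1 + m0 lam • F).det := (Matrix.isUnit_iff_isUnit_det _).1 hunit
  have hGmul : (1 + m0 lam • F) * G lam = 1 := Matrix.mul_nonsing_inv _ hdetu
  have hGsq : G lam - m0 lam • (G lam * F * G lam) = G lam * G lam := by
    have h1 : G lam = 1 - m0 lam • (F * G lam) := by
      have h2 := hGmul
      rw [Matrix.add_mul, Matrix.one_mul, Matrix.smul_mul] at h2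
      exact eq_sub_of_add_eq h2
    calc G lam - m0 lam • (G lam * F * G lam)
        = G lam * (1 - m0 lam • (F * G lam)) := by
          rw [Matrix.mul_sub, Matrix.mul_one, Matrix.mul_smul, Matrix.mul_assoc]
      _ = G lam * G lam := by rw [← h1]
  -- derivative of m0
  have hm0fun : m0 = fun l => ∫ x, (x - l)⁻¹ ∂μ0 := funext hm0
  have hm0' : HasDerivAt m0 (d lam) lam := by
    rw [hm0fun]; exact m0_hasDerivAt μ0 hlam
  -- derivative of each t r
  have ht'r : ∀ r, HasDerivAt (t r) (t' r lam) lam := by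
    intro r
    set Ar := (U r)ᵀ * B * W with hAr
    set L : Matrix ((r : Fin k) × Fin (m_ r)) ((r : Fin k) × Fin (m_ r)) ℝ →L[ℝ] ℝ :=
      LinearMap.toContinuousLinearMap
      { toFun := fun X => (Ar * X * Arᵀ).trace
        map_add' := fun X Y => by simp [Matrix.mul_add, Matrix.add_mul]
        map_smul' := fun c X => by simp [Matrix.mul_smul, Matrix.smul_mul] } with hL
    have hLapp : ∀ X, L X = (Ar * X * Arᵀ).trace := fun X => rfl
    have hArt : ∀ X : Matrix ((r : Fin k) × Fin (m_ r)) ((r : Fin k) × Fin (m_ r)) ℝ, Ar * X * Arᵀ = (U r)ᵀ * B * W * X * (Wᵀ * B * U r) := by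
      intro X
      have h3 : Arᵀ = Wᵀ * B * U r := by
        rw [hAr]
        simp [Matrix.transpose_mul, Matrix.mul_assoc, hB.eq]
      rw [h3, hAr]
    have hteq : t r = fun l =>
        ((U r)ᵀ * B * U r).trace - (N : ℝ) * (m0 l * L ((1 + m0 l • F)⁻¹)) := by
      funext l
      rw [ht r l, hLapp, hArt]
      ring
    have hGl : HasDerivAt (fun l => (1 + m0 l • F)⁻¹)
        (d lam • -(G lam * F * G lam)) lam := by
      have := (hasDerivAt_one_add_smul_inv F (m0 lam) hunit).scomp lam hm0'
      exact this
    have hLG : HasDerivAt (fun l => L ((1 + m0 l • F)⁻¹))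
        (L (d lam • -(G lam * F * G lam))) lam :=
      L.hasFDerivAt.comp_hasDerivAt lam hGl
    have hmain := ((hm0'.mul hLG).const_mul (N : ℝ)).const_sub
      (((U r)ᵀ * B * U r).trace)
    rw [hteq]
    refine hmain.congr_deriv ?_
    have hz : L (G lam * G lam) = L (G lam) - m0 lam * L (G lam * F * G lam) := by
      rw [← hGsq, map_sub, L.map_smul, smul_eq_mul]
    have h4 : (Ar * (G lam * G lam) * Arᵀ).trace = L (G lam * G lam) := (hLapp _).symm
    simp only [ht'_def]
    rw [L.map_smul, L.map_neg, smul_eq_mul, h4, hz]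
    ring
  refine ⟨?_, ?_⟩
  · intro i j
    have hfun : (fun l => T l i j) = fun l =>
        l * (1 : Matrix (Fin p) (Fin p) ℝ) i j - ∑ r, t r l * Sig r i j := by
      funext l
      rw [hT l]
      simp [Matrix.sub_apply, Matrix.smul_apply, Matrix.sum_apply, smul_eq_mul]
    rw [hfun]
    have h1 : HasDerivAt (fun l : ℝ => l * (1 : Matrix (Fin p) (Fin p) ℝ) i j)
        ((1 : Matrix (Fin p) (Fin p) ℝ) i j) lam := by
      simpa using (hasDerivAt_id lam).mul_const ((1 : Matrix (Fin p) (Fin p) ℝ) i j)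
    have h2 : HasDerivAt (fun l => ∑ r, t r l * Sig r i j)
        (∑ r, t' r lam * Sig r i j) lam :=
      HasDerivAt.fun_sum fun r _ => (ht'r r).mul_const _
    have h3 := h1.sub h2
    refine h3.congr_deriv ?_
    simp [Matrix.sub_apply, Matrix.sum_apply, Matrix.smul_apply, smul_eq_mul]
  · have hrw : (1 : Matrix (Fin p) (Fin p) ℝ) - (∑ r, t' r lam • Sig r) - 1
        = ∑ r, (-(t' r lam)) • Sig r := by
      rw [sub_right_comm, sub_self, zero_sub, ← Finset.sum_neg_distrib]
      simp [neg_smul]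
    show ((1 : Matrix (Fin p) (Fin p) ℝ) - (∑ r, t' r lam • Sig r) - 1).PosSemidef
    rw [hrw]
    apply _root_.posSemidef_sum
    intro r _
    apply posSemidef_smul_of_nonneg (hSig r)
    have h5 : ((U r)ᵀ * B * W) * (G lam * G lam) * ((U r)ᵀ * B * W)ᵀ
        = (((U r)ᵀ * B * W) * G lam) * (((U r)ᵀ * B * W) * G lam)ᵀ := by
      conv_rhs => rw [Matrix.transpose_mul, hGt]
      simp [Matrix.mul_assoc]
    have h6 : 0 ≤ (((U r)ᵀ * B * W) * (G lam * G lam) * ((U r)ᵀ * B * W)ᵀ).trace := by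
      rw [h5]; exact trace_mul_transpose_nonneg _
    rw [ht'_def]
    simp only [neg_neg, neg_mul]
    exact mul_nonneg (hd_nonneg lam) (mul_nonneg (Nat.cast_nonneg N) h6)
end

section
/- Combinatorial bound for products of matrix entries (Lemma A.4): Fix an integer ℓ ≥ 1. There is a constant C_ℓ > 0 depending only on ℓ such that the following holds for every n ≥ 1. For each a = 1, …, ℓ, let B_a ∈ ℝ^{n×n} satisfy B_a[i,j] ≥ 0 for all i,j, B_a[i,i] = 0 for all i, and ‖B_a‖_HS ≤ 1. For a tuple (i,j) = (i_1,…,i_ℓ, j_1,…,j_ℓ) ∈ {1,…,n}^{2ℓ}, let s(i,j) denote the number of elements of {1,…,n} appearing exactly once among the 2ℓ coordinates of (i,j). Then for every s ∈ {0, 1, …, 2ℓ}: Σ over all (i,j) ∈ {1,…,n}^{2ℓ} with s(i,j) = s of ∏_{a=1}^ℓ B_a[i_a, j_a] ≤ C_ℓ·n^{s/2}. -/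
open Finset


/-- Generalized Cauchy–Schwarz: for a list of at least two nonnegative functions on `Fin n`,
the sum of the pointwise product is at most the product of the L² norms. -/
lemma listCS (n : ℕ) : ∀ (L : List (Fin n → ℝ)), 2 ≤ L.length →
    (∀ g ∈ L, ∀ i, 0 ≤ g i) →
    ∑ i, (L.map (fun g => g i)).prod ≤ (L.map (fun g => Real.sqrt (∑ i, g i ^ 2))).prod := by
  intro L
  induction L with
  | nil => intro h; simp at h
  | cons a t ih =>
    intro hlen hnn
    match t with
    | [] => simp at hlen
    | [b] =>
      have := Real.sum_mul_le_sqrt_mul_sqrt (Finset.univ : Finset (Fin n)) a b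
      simpa using this
    | b :: c :: t' =>
      have h2 : 2 ≤ (b :: c :: t').length := by simp
      have hnn' : ∀ g ∈ (b :: c :: t'), ∀ i, 0 ≤ g i := by
        intro g hg; exact hnn g (List.mem_cons_of_mem _ hg)
      have ha : ∀ i, 0 ≤ a i := hnn a List.mem_cons_self
      have hA : ∀ i : Fin n, a i ≤ Real.sqrt (∑ j, a j ^ 2) := by
        intro i
        have : a i = Real.sqrt (a i ^ 2) := (Real.sqrt_sq (ha i)).symm
        rw [this]
        apply Real.sqrt_le_sqrt
        exact Finset.single_le_sum (f := fun j => a j ^ 2) (fun j _ => sq_nonneg _) (mem_univ i)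
      have hrestnn : ∀ i : Fin n, 0 ≤ ((b :: c :: t').map (fun g => g i)).prod := by
        intro i
        apply List.prod_nonneg
        intro y hy
        simp only [List.mem_map] at hy
        obtain ⟨g, hg, rfl⟩ := hy
        exact hnn' g hg i
      calc ∑ i, ((a :: b :: c :: t').map (fun g => g i)).prod
          = ∑ i, a i * ((b :: c :: t').map (fun g => g i)).prod := by
            simp [List.prod_cons]
        _ ≤ ∑ i, Real.sqrt (∑ j, a j ^ 2) * ((b :: c :: t').map (fun g => g i)).prod := by
            apply Finset.sum_le_sum
            intro i _
            exact mul_le_mul_of_nonneg_right (hA i) (hrestnn i)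
        _ = Real.sqrt (∑ j, a j ^ 2) * ∑ i, ((b :: c :: t').map (fun g => g i)).prod := by
            rw [Finset.mul_sum]
        _ ≤ Real.sqrt (∑ j, a j ^ 2) * ((b :: c :: t').map (fun g => Real.sqrt (∑ i, g i ^ 2))).prod := by
            apply mul_le_mul_of_nonneg_left (ih h2 hnn') (Real.sqrt_nonneg _)
        _ = ((a :: b :: c :: t').map (fun g => Real.sqrt (∑ i, g i ^ 2))).prod := by
            simp [List.prod_cons]

lemma update_splitAt {V : Type*} [DecidableEq V] (n : ℕ) (x : V)
    (b i : Fin n) (ψ : {y // y ≠ x} → Fin n) :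
    Function.update ((Equiv.funSplitAt x (Fin n)).symm (b, ψ)) x i
      = (Equiv.funSplitAt x (Fin n)).symm (i, ψ) := by
  funext j
  by_cases h : j = x
  · subst h; simp [Equiv.funSplitAt, Equiv.piSplitAt, Function.update]
  · simp [Equiv.funSplitAt, Equiv.piSplitAt, Function.update, h]

lemma sum_update {V : Type*} [Fintype V] [DecidableEq V] (n : ℕ) (x : V)
    (F : (V → Fin n) → ℝ) :
    ∑ φ : V → Fin n, ∑ i : Fin n, F (Function.update φ x i)
      = (n : ℝ) * ∑ φ : V → Fin n, F φ := by
  classical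
  have e := Equiv.funSplitAt x (Fin n)
  rw [← Equiv.sum_comp (Equiv.funSplitAt x (Fin n)).symm
    (fun φ => ∑ i : Fin n, F (Function.update φ x i)),
    ← Equiv.sum_comp (Equiv.funSplitAt x (Fin n)).symm F]
  rw [Fintype.sum_prod_type, Fintype.sum_prod_type]
  have : ∀ (b : Fin n) (ψ : {y // y ≠ x} → Fin n),
      ∑ i : Fin n, F (Function.update ((Equiv.funSplitAt x (Fin n)).symm (b, ψ)) x i)
        = ∑ i : Fin n, F ((Equiv.funSplitAt x (Fin n)).symm (i, ψ)) := by
    intro b ψ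
    congr 1
    funext i
    rw [update_splitAt]
  simp_rw [this]
  rw [Finset.sum_const, Finset.card_univ, Fintype.card_fin, nsmul_eq_mul, Finset.sum_comm]


lemma prod_map_split {α : Type*} (l : List α) (q : α → Bool) (f : α → ℝ) :
    (l.map f).prod = ((l.filter q).map f).prod * ((l.filter (fun a => !q a)).map f).prod := by
  rw [← List.prod_append, ← List.map_append]
  exact (List.Perm.prod_eq (List.Perm.map f (List.filter_append_perm q l))).symm

lemma countP_split {α : Type*} (l : List α) (p q : α → Bool) :
    l.countP p = (l.filter q).countP p + (l.filter (fun a => !q a)).countP p := by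
  rw [← List.countP_append]
  exact (List.Perm.countP_eq p (List.filter_append_perm q l)).symm

lemma core {V : Type*} [Fintype V] [DecidableEq V] (n : ℕ) (hn : 1 ≤ n) :
    ∀ (m : ℕ) (S : Finset V) (E : List (V × V × (Fin n → Fin n → ℝ)))
      (K : List (V × (Fin n → ℝ))),
      S.card = m →
      (∀ e ∈ E, e.1 ∈ S ∧ e.2.1 ∈ S ∧ e.1 ≠ e.2.1 ∧ ∀ i j, 0 ≤ e.2.2 i j) →
      (∀ k ∈ K, k.1 ∈ S ∧ ∀ i, 0 ≤ k.2 i) →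
      (∀ x ∈ S, 2 ≤ E.countP (fun e => decide (e.1 = x) || decide (e.2.1 = x))
          + K.countP (fun k => decide (k.1 = x))) →
      ∑ φ : V → Fin n,
          ((E.map (fun e => e.2.2 (φ e.1) (φ e.2.1))).prod
            * (K.map (fun k => k.2 (φ k.1))).prod)
        ≤ (n : ℝ) ^ (Fintype.card V - S.card)
            * (E.map (fun e => Real.sqrt (∑ i, ∑ j, e.2.2 i j ^ 2))).prod
            * (K.map (fun k => Real.sqrt (∑ i, k.2 i ^ 2))).prod := by
  intro m
  induction m with
  | zero =>
    intro S E K hcard hE hK _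
    have hS : S = ∅ := Finset.card_eq_zero.mp hcard
    subst hS
    have hEnil : E = [] := by
      apply List.eq_nil_iff_forall_not_mem.mpr
      intro e he
      exact absurd (hE e he).1 (Finset.notMem_empty _)
    have hKnil : K = [] := by
      apply List.eq_nil_iff_forall_not_mem.mpr
      intro k hk
      exact absurd (hK k hk).1 (Finset.notMem_empty _)
    subst hEnil; subst hKnil
    simp [Finset.sum_const, Fintype.card_fun]
  | succ m ih =>
    intro S E K hcard hE hK hdeg
    classical
    classical
    obtain ⟨x, hx⟩ : S.Nonempty := Finset.card_pos.mp (by omega)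
    set pE : V × V × (Fin n → Fin n → ℝ) → Bool :=
      fun e => decide (e.1 = x) || decide (e.2.1 = x) with hpE
    set pK : V × (Fin n → ℝ) → Bool := fun k => decide (k.1 = x) with hpK
    set incE := E.filter pE with hincE
    set restE := E.filter (fun e => !pE e) with hrestE
    set incK := K.filter pK with hincK
    set restK := K.filter (fun k => !pK k) with hrestK
    set newu : V × V × (Fin n → Fin n → ℝ) → V × (Fin n → ℝ) :=
      fun e => if e.1 = x then (e.2.1, fun j => Real.sqrt (∑ i, e.2.2 i j ^ 2))
        else (e.1, fun i => Real.sqrt (∑ j, e.2.2 i j ^ 2)) with hnewu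
    set K' := restK ++ incE.map newu with hK'def
    set S' := S.erase x with hS'
    -- membership facts
    have memincE : ∀ e ∈ incE, e ∈ E ∧ (e.1 = x ∨ e.2.1 = x) := by
      intro e he
      rw [hincE, List.mem_filter] at he
      refine ⟨he.1, ?_⟩
      have := he.2
      simpa [hpE] using this
    have memrestE : ∀ e ∈ restE, e ∈ E ∧ ¬(e.1 = x) ∧ ¬(e.2.1 = x) := by
      intro e he
      rw [hrestE, List.mem_filter] at he
      refine ⟨he.1, ?_⟩
      have := he.2
      simpa [hpE, not_or] using this
    have memincK : ∀ k ∈ incK, k ∈ K ∧ k.1 = x := by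
      intro k hk
      rw [hincK, List.mem_filter] at hk
      exact ⟨hk.1, by simpa [hpK] using hk.2⟩
    have memrestK : ∀ k ∈ restK, k ∈ K ∧ ¬(k.1 = x) := by
      intro k hk
      rw [hrestK, List.mem_filter] at hk
      exact ⟨hk.1, by simpa [hpK] using hk.2⟩
    -- newu's vertex is the "other" endpoint, in S', and the function is nonneg
    have hnewu_mem : ∀ e ∈ incE, (newu e).1 ∈ S' ∧ ∀ i, 0 ≤ (newu e).2 i := by
      intro e he
      obtain ⟨heE, hinc⟩ := memincE e he
      obtain ⟨h1, h2, h3, _⟩ := hE e heE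
      by_cases hex : e.1 = x
      · have : (newu e) = (e.2.1, fun j => Real.sqrt (∑ i, e.2.2 i j ^ 2)) := by
          rw [hnewu]; simp [hex]
        rw [this]
        refine ⟨Finset.mem_erase.mpr ⟨by rw [← hex]; exact fun h => h3 h.symm, h2⟩,
          fun i => Real.sqrt_nonneg _⟩
      · have : (newu e) = (e.1, fun i => Real.sqrt (∑ j, e.2.2 i j ^ 2)) := by
          rw [hnewu]; simp [hex]
        rw [this]
        exact ⟨Finset.mem_erase.mpr ⟨hex, h1⟩, fun i => Real.sqrt_nonneg _⟩
    -- hypotheses for the recursive call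
    have hE' : ∀ e ∈ restE, e.1 ∈ S' ∧ e.2.1 ∈ S' ∧ e.1 ≠ e.2.1 ∧ ∀ i j, 0 ≤ e.2.2 i j := by
      intro e he
      obtain ⟨heE, h1, h2⟩ := memrestE e he
      obtain ⟨hm1, hm2, hm3, hm4⟩ := hE e heE
      exact ⟨Finset.mem_erase.mpr ⟨h1, hm1⟩, Finset.mem_erase.mpr ⟨h2, hm2⟩, hm3, hm4⟩
    have hKmem' : ∀ k ∈ K', k.1 ∈ S' ∧ ∀ i, 0 ≤ k.2 i := by
      intro k hk
      rw [hK'def, List.mem_append] at hk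
      rcases hk with hk | hk
      · obtain ⟨hkK, hkx⟩ := memrestK k hk
        exact ⟨Finset.mem_erase.mpr ⟨hkx, (hK k hkK).1⟩, (hK k hkK).2⟩
      · obtain ⟨e, he, rfl⟩ := List.mem_map.mp hk
        exact hnewu_mem e he
    have hdeg' : ∀ y ∈ S', 2 ≤ restE.countP (fun e => decide (e.1 = y) || decide (e.2.1 = y))
        + K'.countP (fun k => decide (k.1 = y)) := by
      intro y hy
      have hyS : y ∈ S := Finset.mem_of_mem_erase hy
      have hyx : y ≠ x := (Finset.mem_erase.mp hy).1
      set pEy : V × V × (Fin n → Fin n → ℝ) → Bool :=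
        fun e => decide (e.1 = y) || decide (e.2.1 = y) with hpEy
      set pKy : V × (Fin n → ℝ) → Bool := fun k => decide (k.1 = y) with hpKy
      have e1 : K'.countP pKy = restK.countP pKy + (incE.map newu).countP pKy := by
        rw [hK'def, List.countP_append]
      have e2 : restK.countP pKy = K.countP pKy := by
        rw [hrestK, List.countP_filter]
        apply List.countP_congr
        intro k _
        simp only [hpKy, hpK, Bool.and_eq_true, Bool.not_eq_true', decide_eq_true_eq,
          decide_eq_false_iff_not]
        constructor
        · intro h; exact h.1
        · intro h; exact ⟨h, by rw [h]; exact hyx⟩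
      have e3 : (incE.map newu).countP pKy = E.countP (fun e => pEy e && pE e) := by
        rw [List.countP_map, hincE, List.countP_filter]
        apply List.countP_congr
        intro e heE
        obtain ⟨_, _, hne, _⟩ := hE e heE
        simp only [Function.comp, hpKy, hpEy, hpE, hnewu, Bool.and_eq_true,
          decide_eq_true_eq, Bool.or_eq_true]
        by_cases hex : e.1 = x
        · simp only [hex, if_pos rfl]
          constructor
          · intro ⟨h1, h2⟩; exact ⟨Or.inr h1, h2⟩
          · intro ⟨h1, h2⟩
            rcases h1 with h1 | h1
            · exact absurd h1 (Ne.symm hyx)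
            · exact ⟨h1, h2⟩
        · simp only [if_neg hex]
          constructor
          · intro ⟨h1, h2⟩; exact ⟨Or.inl h1, h2⟩
          · intro ⟨h1, h2⟩
            rcases h2 with h2 | h2
            · exact absurd h2 hex
            rcases h1 with h1 | h1
            · exact ⟨h1, Or.inr h2⟩
            · exact absurd (h2.symm.trans h1) (Ne.symm hyx)
      have e4 : restE.countP pEy = E.countP (fun e => pEy e && !pE e) := by
        rw [hrestE, List.countP_filter]
      have e5 : E.countP pEy = E.countP (fun e => pEy e && pE e)
          + E.countP (fun e => pEy e && !pE e) := by
        rw [countP_split E pEy pE, ← List.countP_filter, ← List.countP_filter]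
      have hdy : 2 ≤ E.countP pEy + K.countP pKy := hdeg y hyS
      rw [e5] at hdy
      rw [e1, e2, e3, e4]
      omega
    have hS'card : S'.card = m := by
      rw [hS', Finset.card_erase_of_mem hx, hcard]
      omega
    have hrec := ih S' restE K' hS'card hE' hKmem' hdeg'
    set F : (V → Fin n) → ℝ := fun ψ =>
      (E.map (fun e => e.2.2 (ψ e.1) (ψ e.2.1))).prod
        * (K.map (fun k => k.2 (ψ k.1))).prod with hF
    set cK := (incK.map (fun k => Real.sqrt (∑ i, k.2 i ^ 2))).prod with hcK
    have hcK0 : 0 ≤ cK := by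
      rw [hcK]
      apply List.prod_nonneg
      intro a ha
      obtain ⟨k, hk, rfl⟩ := List.mem_map.mp ha
      exact Real.sqrt_nonneg _
    have key : ∀ φ : V → Fin n, ∑ i : Fin n, F (Function.update φ x i)
        ≤ cK * ((restE.map (fun e => e.2.2 (φ e.1) (φ e.2.1))).prod
            * (K'.map (fun k => k.2 (φ k.1))).prod) := by
      intro φ
      set A : List (Fin n → ℝ) :=
        incE.map (fun e => fun i : Fin n =>
            if e.1 = x then e.2.2 i (φ e.2.1) else e.2.2 (φ e.1) i)
          ++ incK.map (fun k => k.2) with hA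
      have lenA : 2 ≤ A.length := by
        rw [hA, List.length_append, List.length_map, List.length_map, hincE, hincK,
          ← List.countP_eq_length_filter, ← List.countP_eq_length_filter]
        exact hdeg x hx
      have nnA : ∀ g ∈ A, ∀ i, 0 ≤ g i := by
        intro g hg i
        rw [hA, List.mem_append] at hg
        rcases hg with hg | hg
        · obtain ⟨e, he, rfl⟩ := List.mem_map.mp hg
          have h4 := (hE e (memincE e he).1).2.2.2
          by_cases hex : e.1 = x
          · simp only [if_pos hex]; exact h4 _ _
          · simp only [if_neg hex]; exact h4 _ _
        · obtain ⟨k, hk, rfl⟩ := List.mem_map.mp hg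
          exact (hK k (memincK k hk).1).2 i
      have hCS := listCS n A lenA nnA
      have hrestnn : 0 ≤ (restE.map (fun e => e.2.2 (φ e.1) (φ e.2.1))).prod
          * (restK.map (fun k => k.2 (φ k.1))).prod := by
        apply mul_nonneg <;>
        · apply List.prod_nonneg
          intro a ha
          obtain ⟨e, he, rfl⟩ := List.mem_map.mp ha
          first
            | exact (hE e (memrestE e he).1).2.2.2 _ _
            | exact (hK e (memrestK e he).1).2 _
      have hsplit : ∀ i : Fin n, F (Function.update φ x i)
          = ((restE.map (fun e => e.2.2 (φ e.1) (φ e.2.1))).prod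
              * (restK.map (fun k => k.2 (φ k.1))).prod) * (A.map (fun g => g i)).prod := by
        intro i
        rw [hF]
        dsimp only
        rw [prod_map_split E pE
            (fun e => e.2.2 (Function.update φ x i e.1) (Function.update φ x i e.2.1)),
          prod_map_split K pK (fun k => k.2 (Function.update φ x i k.1)),
          ← hincE, ← hrestE, ← hincK, ← hrestK]
        have r1 : restE.map
            (fun e => e.2.2 (Function.update φ x i e.1) (Function.update φ x i e.2.1))
            = restE.map (fun e => e.2.2 (φ e.1) (φ e.2.1)) := by
          apply List.map_congr_left
          intro e he
          obtain ⟨_, h1, h2⟩ := memrestE e he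
          rw [Function.update_of_ne h1, Function.update_of_ne h2]
        have r2 : restK.map (fun k => k.2 (Function.update φ x i k.1))
            = restK.map (fun k => k.2 (φ k.1)) := by
          apply List.map_congr_left
          intro k hk
          rw [Function.update_of_ne (memrestK k hk).2]
        have r3 : incE.map
            (fun e => e.2.2 (Function.update φ x i e.1) (Function.update φ x i e.2.1))
            = incE.map (fun e =>
                if e.1 = x then e.2.2 i (φ e.2.1) else e.2.2 (φ e.1) i) := by
          apply List.map_congr_left
          intro e he
          obtain ⟨heE, hinc⟩ := memincE e he
          have hne := (hE e heE).2.2.1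
          by_cases hex : e.1 = x
          · have h21 : e.2.1 ≠ x := fun h => hne (hex.trans h.symm)
            rw [if_pos hex, hex, Function.update_self, Function.update_of_ne h21]
          · have h21 : e.2.1 = x := by tauto
            rw [if_neg hex, Function.update_of_ne hex, h21, Function.update_self]
        have r4 : incK.map (fun k => k.2 (Function.update φ x i k.1))
            = incK.map (fun k => k.2 i) := by
          apply List.map_congr_left
          intro k hk
          rw [(memincK k hk).2, Function.update_self]
        have r5 : (A.map (fun g => g i)).prod
            = (incE.map (fun e =>
                if e.1 = x then e.2.2 i (φ e.2.1) else e.2.2 (φ e.1) i)).prod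
              * (incK.map (fun k => k.2 i)).prod := by
          rw [hA, List.map_append, List.prod_append, List.map_map, List.map_map]
          rfl
        rw [r1, r2, r3, r4, r5]
        ring
      have hAnorm : (A.map (fun g => Real.sqrt (∑ i, g i ^ 2))).prod
          = (incE.map (fun e => (newu e).2 (φ (newu e).1))).prod * cK := by
        rw [hA, List.map_append, List.prod_append, List.map_map, List.map_map, hcK]
        congr 1
        · apply congrArg
          apply List.map_congr_left
          intro e he
          by_cases hex : e.1 = x
          · simp only [Function.comp, hnewu, if_pos hex, hex, if_true, eq_self_iff_true]
          · simp only [Function.comp, hnewu, if_neg hex]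
      have hK'prod : (K'.map (fun k => k.2 (φ k.1))).prod
          = (restK.map (fun k => k.2 (φ k.1))).prod
            * (incE.map (fun e => (newu e).2 (φ (newu e).1))).prod := by
        rw [hK'def, List.map_append, List.prod_append, List.map_map]
        rfl
      calc ∑ i : Fin n, F (Function.update φ x i)
          = ((restE.map (fun e => e.2.2 (φ e.1) (φ e.2.1))).prod
              * (restK.map (fun k => k.2 (φ k.1))).prod)
            * ∑ i : Fin n, (A.map (fun g => g i)).prod := by
            rw [Finset.mul_sum]
            exact Finset.sum_congr rfl (fun i _ => hsplit i)
        _ ≤ ((restE.map (fun e => e.2.2 (φ e.1) (φ e.2.1))).prod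
              * (restK.map (fun k => k.2 (φ k.1))).prod)
            * (A.map (fun g => Real.sqrt (∑ i, g i ^ 2))).prod :=
            mul_le_mul_of_nonneg_left hCS hrestnn
        _ = cK * ((restE.map (fun e => e.2.2 (φ e.1) (φ e.2.1))).prod
              * (K'.map (fun k => k.2 (φ k.1))).prod) := by
            rw [hAnorm, hK'prod]
            ring
    set NEr := (restE.map (fun e => Real.sqrt (∑ i, ∑ j, e.2.2 i j ^ 2))).prod with hNEr
    set NKr := (restK.map (fun k => Real.sqrt (∑ i, k.2 i ^ 2))).prod with hNKr
    set NEi := (incE.map (fun e => Real.sqrt (∑ i, ∑ j, e.2.2 i j ^ 2))).prod with hNEi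
    have hNE : (E.map (fun e => Real.sqrt (∑ i, ∑ j, e.2.2 i j ^ 2))).prod = NEi * NEr := by
      rw [prod_map_split E pE (fun e => Real.sqrt (∑ i, ∑ j, e.2.2 i j ^ 2)),
        ← hincE, ← hrestE]
    have hNK : (K.map (fun k => Real.sqrt (∑ i, k.2 i ^ 2))).prod = cK * NKr := by
      rw [prod_map_split K pK (fun k => Real.sqrt (∑ i, k.2 i ^ 2)), ← hincK, ← hrestK]
    have hnewunorm : ((incE.map newu).map (fun k => Real.sqrt (∑ i, k.2 i ^ 2))).prod
        = NEi := by
      rw [List.map_map, hNEi]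
      apply congrArg
      apply List.map_congr_left
      intro e he
      by_cases hex : e.1 = x
      · simp only [Function.comp, hnewu, if_pos hex]
        rw [show (∑ i, ∑ j, e.2.2 i j ^ 2) = ∑ j, ∑ i, e.2.2 i j ^ 2 from Finset.sum_comm]
        congr 1
        apply Finset.sum_congr rfl
        intro j _
        rw [Real.sq_sqrt]
        positivity
      · simp only [Function.comp, hnewu, if_neg hex]
        congr 1
        apply Finset.sum_congr rfl
        intro i _
        rw [Real.sq_sqrt]
        positivity
    have hNK' : (K'.map (fun k => Real.sqrt (∑ i, k.2 i ^ 2))).prod = NKr * NEi := by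
      rw [hK'def, List.map_append, List.prod_append, hnewunorm, hNKr]
    have hcardle : m + 1 ≤ Fintype.card V := by
      rw [← hcard]
      exact (Finset.card_le_univ S).trans_eq Finset.card_univ
    have hpow : (n : ℝ) ^ (Fintype.card V - m) = (n : ℝ) ^ (Fintype.card V - (m + 1)) * n := by
      have h : Fintype.card V - m = (Fintype.card V - (m + 1)) + 1 := by omega
      rw [h, pow_succ]
    have hnpos : (0 : ℝ) < n := by
      have : (0 : ℕ) < n := hn
      exact_mod_cast this
    have main : (n : ℝ) * ∑ φ : V → Fin n, F φ
        ≤ (n : ℝ) * ((n : ℝ) ^ (Fintype.card V - (m + 1))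
            * (E.map (fun e => Real.sqrt (∑ i, ∑ j, e.2.2 i j ^ 2))).prod
            * (K.map (fun k => Real.sqrt (∑ i, k.2 i ^ 2))).prod) := by
      rw [← sum_update n x F]
      calc ∑ φ : V → Fin n, ∑ i : Fin n, F (Function.update φ x i)
          ≤ ∑ φ : V → Fin n, cK * ((restE.map (fun e => e.2.2 (φ e.1) (φ e.2.1))).prod
              * (K'.map (fun k => k.2 (φ k.1))).prod) :=
            Finset.sum_le_sum (fun φ _ => key φ)
        _ = cK * ∑ φ : V → Fin n, ((restE.map (fun e => e.2.2 (φ e.1) (φ e.2.1))).prod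
              * (K'.map (fun k => k.2 (φ k.1))).prod) := by rw [Finset.mul_sum]
        _ ≤ cK * ((n : ℝ) ^ (Fintype.card V - S'.card)
              * (restE.map (fun e => Real.sqrt (∑ i, ∑ j, e.2.2 i j ^ 2))).prod
              * (K'.map (fun k => Real.sqrt (∑ i, k.2 i ^ 2))).prod) :=
            mul_le_mul_of_nonneg_left hrec hcK0
        _ = (n : ℝ) * ((n : ℝ) ^ (Fintype.card V - (m + 1))
            * (E.map (fun e => Real.sqrt (∑ i, ∑ j, e.2.2 i j ^ 2))).prod
            * (K.map (fun k => Real.sqrt (∑ i, k.2 i ^ 2))).prod) := by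
            rw [hS'card, hNK', hNE, hNK, hpow]
            ring
    rw [hcard]
    exact le_of_mul_le_mul_left main hnpos

lemma countP_finRange (l : ℕ) (p : Fin l → Bool) :
    (List.finRange l).countP p = (univ.filter (fun a => p a = true)).card := by
  rw [List.countP_eq_length_filter, Fin.univ_def]
  simp [Finset.filter, Finset.card]

lemma countP_or_disjoint {α : Type*} (p q : α → Bool) :
    ∀ (l : List α), (∀ a ∈ l, ¬(p a = true ∧ q a = true)) →
      l.countP (fun a => p a || q a) = l.countP p + l.countP q := by
  intro l
  induction l with
  | nil => intro _; simp
  | cons a t ih =>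
    intro h
    have ht := ih (fun b hb => h b (List.mem_cons_of_mem _ hb))
    have ha := h a List.mem_cons_self
    by_cases hp : p a = true
    · have hq : ¬ q a = true := fun hq => ha ⟨hp, hq⟩
      simp [List.countP_cons, hp, hq, ht]
      omega
    · by_cases hq : q a = true <;> simp [List.countP_cons, hp, hq, ht] <;> omega

lemma sqrt_pow_nat (n s : ℕ) : (Real.sqrt n)^s = (n:ℝ) ^ ((s:ℝ)/2) := by
  rw [Real.sqrt_eq_rpow, ← Real.rpow_natCast ((n:ℝ) ^ ((1:ℝ)/2)) s,
    ← Real.rpow_mul (by positivity), one_div_mul_eq_div]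


def cmapD {l n : ℕ} (ij : (Fin l → Fin n) × (Fin l → Fin n)) (t : Fin (l + l)) : Fin n :=
  Sum.elim ij.1 ij.2 (finSumFinEquiv.symm t)

def leadD {l n : ℕ} (ij : (Fin l → Fin n) × (Fin l → Fin n)) (t : Fin (l + l)) : Fin (l + l) :=
  (Finset.univ.filter (fun t' => cmapD ij t' = cmapD ij t)).min'
    ⟨t, Finset.mem_filter.mpr ⟨Finset.mem_univ t, rfl⟩⟩

lemma cmapD_inl {l n : ℕ} (ij : (Fin l → Fin n) × (Fin l → Fin n)) (a : Fin l) :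
    cmapD ij (finSumFinEquiv (Sum.inl a)) = ij.1 a := by
  unfold cmapD; rw [Equiv.symm_apply_apply]; rfl

lemma cmapD_inr {l n : ℕ} (ij : (Fin l → Fin n) × (Fin l → Fin n)) (a : Fin l) :
    cmapD ij (finSumFinEquiv (Sum.inr a)) = ij.2 a := by
  unfold cmapD; rw [Equiv.symm_apply_apply]; rfl

lemma leadD_spec {l n : ℕ} (ij : (Fin l → Fin n) × (Fin l → Fin n)) (t : Fin (l + l)) :
    cmapD ij (leadD ij t) = cmapD ij t := by
  have h := Finset.min'_mem (Finset.univ.filter (fun t' => cmapD ij t' = cmapD ij t))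
    ⟨t, Finset.mem_filter.mpr ⟨Finset.mem_univ t, rfl⟩⟩
  exact (Finset.mem_filter.mp h).2

lemma leadD_eq_iff {l n : ℕ} (ij : (Fin l → Fin n) × (Fin l → Fin n)) (t t' : Fin (l + l)) :
    cmapD ij t = cmapD ij t' ↔ leadD ij t = leadD ij t' := by
  constructor
  · intro h
    have hset : Finset.univ.filter (fun t'' => cmapD ij t'' = cmapD ij t)
        = Finset.univ.filter (fun t'' => cmapD ij t'' = cmapD ij t') := by
      ext t''; simp [h]
    apply le_antisymm
    · apply Finset.min'_le
      rw [Finset.mem_filter]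
      refine ⟨Finset.mem_univ _, ?_⟩
      rw [h]
      exact leadD_spec ij t'
    · apply Finset.min'_le
      rw [Finset.mem_filter]
      refine ⟨Finset.mem_univ _, ?_⟩
      rw [← h]
      exact leadD_spec ij t
  · intro h
    calc cmapD ij t = cmapD ij (leadD ij t) := (leadD_spec ij t).symm
      _ = cmapD ij (leadD ij t') := by rw [h]
      _ = cmapD ij t' := leadD_spec ij t'

lemma leadD_idem {l n : ℕ} (ij : (Fin l → Fin n) × (Fin l → Fin n)) (t : Fin (l + l)) :
    leadD ij (leadD ij t) = leadD ij t :=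
  (leadD_eq_iff ij (leadD ij t) t).mp (leadD_spec ij t)

lemma card_filter_sum_split (l : ℕ) {γ : Type*} [DecidableEq γ] (g : Fin (l + l) → γ) (v : γ) :
    (univ.filter (fun t => g t = v)).card
      = (univ.filter (fun a : Fin l => g (finSumFinEquiv (Sum.inl a)) = v)).card
        + (univ.filter (fun a : Fin l => g (finSumFinEquiv (Sum.inr a)) = v)).card := by
  rw [Finset.card_filter, Finset.card_filter, Finset.card_filter,
    ← Equiv.sum_comp finSumFinEquiv (fun t => if g t = v then 1 else 0), Fintype.sum_sum_type]


/-- Lemma A.4: combinatorial bound for sums of products of entries of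
matrices with nonnegative entries, zero diagonal, and Hilbert-Schmidt norm at most 1,
over index tuples with a prescribed number `s` of singly-occurring indices. -/
theorem combinatorial_bound_products_matrix_entries
    (l : ℕ) (hl : 1 ≤ l) :
    ∃ Cl : ℝ, 0 < Cl ∧
      ∀ n : ℕ, 1 ≤ n →
      ∀ B : Fin l → Matrix (Fin n) (Fin n) ℝ,
        (∀ a i j, 0 ≤ B a i j) →
        (∀ a i, B a i i = 0) →
        (∀ a, Real.sqrt (∑ i, ∑ j, (B a i j) ^ 2) ≤ 1) →
        ∀ s : ℕ, s ≤ 2 * l →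
          ∑ ij ∈ Finset.univ.filter
              (fun ij : (Fin l → Fin n) × (Fin l → Fin n) =>
                (Finset.univ.filter (fun v : Fin n =>
                  (Finset.univ.filter (fun a : Fin l => ij.1 a = v)).card
                    + (Finset.univ.filter (fun a : Fin l => ij.2 a = v)).card = 1)).card = s),
            ∏ a : Fin l, B a (ij.1 a) (ij.2 a)
            ≤ Cl * (n : ℝ) ^ ((s : ℝ) / 2) := by
  classical
  refine ⟨(((l + l) ^ (l + l) : ℕ) : ℝ) + 1, by positivity, ?_⟩
  intro n hn B hBnn hBdiag hBHS s hs
  have hrpow0 : (0:ℝ) ≤ (n : ℝ) ^ ((s : ℝ) / 2) := Real.rpow_nonneg (by positivity) _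
  set f : (Fin l → Fin n) × (Fin l → Fin n) → ℝ :=
    fun ij => ∏ a : Fin l, B a (ij.1 a) (ij.2 a) with hf
  set Ts : Finset ((Fin l → Fin n) × (Fin l → Fin n)) := Finset.univ.filter
              (fun ij : (Fin l → Fin n) × (Fin l → Fin n) =>
                (Finset.univ.filter (fun v : Fin n =>
                  (Finset.univ.filter (fun a : Fin l => ij.1 a = v)).card
                    + (Finset.univ.filter (fun a : Fin l => ij.2 a = v)).card = 1)).card = s) with hTs
  rw [← Finset.sum_fiberwise Ts (fun ij => leadD ij) f]
  have hcl : ∀ L : Fin (l + l) → Fin (l + l),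
      ∑ ij ∈ Ts.filter (fun ij => leadD ij = L), f ij ≤ (n : ℝ) ^ ((s : ℝ) / 2) := by
    intro L
    by_cases hne : (Ts.filter (fun ij => leadD ij = L)).Nonempty
    swap
    · rw [Finset.not_nonempty_iff_eq_empty.mp hne, Finset.sum_empty]
      exact hrpow0
    obtain ⟨ij₀, hij₀⟩ := hne
    obtain ⟨hij₀Ts, hij₀L⟩ := Finset.mem_filter.mp hij₀
    have hLL : ∀ t, L (L t) = L t := by
      intro t; rw [← hij₀L]; exact leadD_idem ij₀ t
    by_cases hloop : ∃ a : Fin l,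
        L (finSumFinEquiv (Sum.inl a)) = L (finSumFinEquiv (Sum.inr a))
    · have hz : ∀ ij ∈ Ts.filter (fun ij => leadD ij = L), f ij = 0 := by
        intro ij hij
        obtain ⟨_, hL⟩ := Finset.mem_filter.mp hij
        obtain ⟨a, ha⟩ := hloop
        have hceq : cmapD ij (finSumFinEquiv (Sum.inl a))
            = cmapD ij (finSumFinEquiv (Sum.inr a)) := by
          apply (leadD_eq_iff ij _ _).mpr
          rw [hL]; exact ha
        rw [cmapD_inl, cmapD_inr] at hceq
        rw [hf]
        apply Finset.prod_eq_zero (Finset.mem_univ a)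
        rw [hceq]; exact hBdiag a _
      rw [Finset.sum_eq_zero hz]
      exact hrpow0
    -- main case: apply the core inequality
    set Vt := {t : Fin (l + l) // L t = t} with hVt
    set Elist : List (Vt × Vt × (Fin n → Fin n → ℝ)) :=
      (List.finRange l).map (fun a =>
        (⟨L (finSumFinEquiv (Sum.inl a)), hLL _⟩, ⟨L (finSumFinEquiv (Sum.inr a)), hLL _⟩,
          fun i j => B a i j)) with hElist
    set D : Finset Vt := univ.filter
      (fun v => (univ.filter (fun t : Fin (l + l) => L t = v.1)).card = 1) with hD
    set Klist : List (Vt × (Fin n → ℝ)) :=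
      D.toList.map (fun v => (v, fun _ => (1:ℝ))) with hKlist
    have hEh : ∀ e ∈ Elist, e.1 ∈ (univ : Finset Vt) ∧ e.2.1 ∈ (univ : Finset Vt)
        ∧ e.1 ≠ e.2.1 ∧ ∀ i j, 0 ≤ e.2.2 i j := by
      intro e he
      rw [hElist] at he
      obtain ⟨a, _, rfl⟩ := List.mem_map.mp he
      refine ⟨Finset.mem_univ _, Finset.mem_univ _, ?_, fun i j => hBnn a i j⟩
      intro hco
      exact hloop ⟨a, congrArg Subtype.val hco⟩
    have hKh : ∀ k ∈ Klist, k.1 ∈ (univ : Finset Vt) ∧ ∀ i, 0 ≤ k.2 i := by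
      intro k hk
      rw [hKlist] at hk
      obtain ⟨v, _, rfl⟩ := List.mem_map.mp hk
      exact ⟨Finset.mem_univ _, fun i => zero_le_one⟩
    have hdegh : ∀ v ∈ (univ : Finset Vt),
        2 ≤ Elist.countP (fun e => decide (e.1 = v) || decide (e.2.1 = v))
          + Klist.countP (fun k => decide (k.1 = v)) := by
      intro v _
      have hEcount : Elist.countP (fun e => decide (e.1 = v) || decide (e.2.1 = v))
          = (univ.filter (fun t : Fin (l + l) => L t = v.1)).card := by
        rw [hElist, List.countP_map]
        have hcomp : ((fun e : Vt × Vt × (Fin n → Fin n → ℝ) =>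
            decide (e.1 = v) || decide (e.2.1 = v)) ∘ (fun a : Fin l =>
            ((⟨L (finSumFinEquiv (Sum.inl a)), hLL _⟩ : Vt),
              (⟨L (finSumFinEquiv (Sum.inr a)), hLL _⟩ : Vt), fun i j => B a i j)))
            = fun a : Fin l => decide ((⟨L (finSumFinEquiv (Sum.inl a)), hLL _⟩ : Vt) = v)
              || decide ((⟨L (finSumFinEquiv (Sum.inr a)), hLL _⟩ : Vt) = v) := rfl
        rw [hcomp, countP_or_disjoint _ _ _ ?hdisj]
        case hdisj =>
          intro a _ hboth
          apply hloop
          refine ⟨a, ?_⟩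
          have h1 := of_decide_eq_true hboth.1
          have h2 := of_decide_eq_true hboth.2
          have := congrArg Subtype.val (h1.trans h2.symm)
          exact this
        rw [countP_finRange, countP_finRange,
          card_filter_sum_split l L v.1]
        congr 1
        · apply Finset.card_nbij' id id <;> intro a ha <;> simp at ha ⊢ <;>
            simp [Subtype.ext_iff] at ha ⊢ <;> grind
        · apply Finset.card_nbij' id id <;> intro a ha <;> simp at ha ⊢ <;>
            simp [Subtype.ext_iff] at ha ⊢ <;> grind
      have hKcount : Klist.countP (fun k => decide (k.1 = v))
          = if v ∈ D then 1 else 0 := by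
        rw [hKlist, List.countP_map]
        have hcomp : ((fun k : Vt × (Fin n → ℝ) => decide (k.1 = v)) ∘
            (fun w : Vt => (w, fun _ : Fin n => (1:ℝ))))
            = fun w : Vt => w == v := by funext w; rw [Bool.eq_iff_iff, beq_iff_eq]; simp
        rw [hcomp]
        by_cases hv : v ∈ D
        · rw [if_pos hv]
          exact List.count_eq_one_of_mem (Finset.nodup_toList D)
            (Finset.mem_toList.mpr hv)
        · rw [if_neg hv]
          exact List.count_eq_zero_of_not_mem (fun h => hv (Finset.mem_toList.mp h))
      have hone : 1 ≤ (univ.filter (fun t : Fin (l + l) => L t = v.1)).card := by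
        apply Finset.card_pos.mpr
        exact ⟨v.1, Finset.mem_filter.mpr ⟨Finset.mem_univ _, v.2⟩⟩
      rw [hEcount, hKcount]
      by_cases h2 : 2 ≤ (univ.filter (fun t : Fin (l + l) => L t = v.1)).card
      · omega
      · have hd1 : (univ.filter (fun t : Fin (l + l) => L t = v.1)).card = 1 := by omega
        have hvD : v ∈ D := by
          rw [hD]
          exact Finset.mem_filter.mpr ⟨Finset.mem_univ _, hd1⟩
        rw [if_pos hvD]
        omega
    have hcore := core n hn (univ : Finset Vt).card (univ : Finset Vt)
      Elist Klist rfl hEh hKh hdegh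
    have hexp : Fintype.card Vt - (univ : Finset Vt).card = 0 := by
      rw [Finset.card_univ]; omega
    rw [hexp, pow_zero] at hcore
    have hNEeq : (Elist.map (fun e => Real.sqrt (∑ i, ∑ j, e.2.2 i j ^ 2))).prod
        = ∏ a : Fin l, Real.sqrt (∑ i, ∑ j, B a i j ^ 2) := by
      rw [hElist, List.map_map, Fin.prod_univ_def]
      rfl
    have hNE1 : (Elist.map (fun e => Real.sqrt (∑ i, ∑ j, e.2.2 i j ^ 2))).prod ≤ 1 := by
      rw [hNEeq]
      exact Finset.prod_le_one (fun a _ => Real.sqrt_nonneg _) (fun a _ => hBHS a)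
    have hNE0 : 0 ≤ (Elist.map (fun e => Real.sqrt (∑ i, ∑ j, e.2.2 i j ^ 2))).prod := by
      apply List.prod_nonneg
      intro a ha
      obtain ⟨e, _, rfl⟩ := List.mem_map.mp ha
      exact Real.sqrt_nonneg _
    -- the number of degree-one vertices is s
    have hDcard : D.card = s := by
      rw [hTs, Finset.mem_filter] at hij₀Ts
      have hsval := hij₀Ts.2
      have hsplit : ∀ v : Fin n,
          (univ.filter (fun a : Fin l => ij₀.1 a = v)).card
            + (univ.filter (fun a : Fin l => ij₀.2 a = v)).card
          = (univ.filter (fun t : Fin (l + l) => cmapD ij₀ t = v)).card := by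
        intro v
        rw [card_filter_sum_split l (cmapD ij₀) v]
        congr 1
        · apply congrArg
          apply Finset.filter_congr
          intro a _
          rw [cmapD_inl]
        · apply congrArg
          apply Finset.filter_congr
          intro a _
          rw [cmapD_inr]
      have hSv : (univ.filter (fun v : Fin n =>
          (univ.filter (fun t : Fin (l + l) => cmapD ij₀ t = v)).card = 1)).card = s := by
        rw [← hsval]
        apply congrArg
        apply Finset.filter_congr
        intro v _
        rw [hsplit v]
      rw [← hSv, hD]
      apply Finset.card_bij (fun (w : Vt) (_ : w ∈ univ.filter
        (fun v : Vt => (univ.filter (fun t : Fin (l + l) => L t = v.1)).card = 1)) => cmapD ij₀ w.1)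
      · intro w hw
        rw [Finset.mem_filter] at hw
        apply Finset.mem_filter.mpr
        refine ⟨Finset.mem_univ _, ?_⟩
        have hsets : (univ.filter (fun t : Fin (l + l) => cmapD ij₀ t = cmapD ij₀ w.1))
            = univ.filter (fun t : Fin (l + l) => L t = w.1) := by
          apply Finset.filter_congr
          intro t _
          rw [leadD_eq_iff ij₀ t w.1, hij₀L, w.2]
        rw [hsets]
        exact hw.2
      · intro w hw w' hw' heq
        have h1 := (leadD_eq_iff ij₀ w.1 w'.1).mp heq
        rw [hij₀L] at h1
        rw [w.2, w'.2] at h1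
        exact Subtype.ext h1
      · intro v hv
        rw [Finset.mem_filter] at hv
        have hpos : 0 < (univ.filter (fun t : Fin (l + l) => cmapD ij₀ t = v)).card := by
          rw [hv.2]; norm_num
        obtain ⟨t₀, ht₀⟩ := Finset.card_pos.mp hpos
        have ht₀v : cmapD ij₀ t₀ = v := (Finset.mem_filter.mp ht₀).2
        refine ⟨⟨L t₀, hLL t₀⟩, ?_, ?_⟩
        · apply Finset.mem_filter.mpr
          refine ⟨Finset.mem_univ _, ?_⟩
          have hsets : (univ.filter (fun t : Fin (l + l) => L t = L t₀))
              = univ.filter (fun t : Fin (l + l) => cmapD ij₀ t = v) := by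
            apply Finset.filter_congr
            intro t _
            rw [← ht₀v]
            constructor
            · intro h
              exact (leadD_eq_iff ij₀ t t₀).mpr (by rw [hij₀L]; exact h)
            · intro h
              have := (leadD_eq_iff ij₀ t t₀).mp h
              rwa [hij₀L] at this
          rw [hsets]
          exact hv.2
        · have hc : cmapD ij₀ (L t₀) = cmapD ij₀ t₀ := by
            rw [← hij₀L]; exact leadD_spec ij₀ t₀
          rw [hc, ht₀v]
    have hNKeq : (Klist.map (fun k => Real.sqrt (∑ i, k.2 i ^ 2))).prod
        = (Real.sqrt n) ^ s := by
      rw [hKlist, List.map_map]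
      have hcomp : ((fun k : Vt × (Fin n → ℝ) => Real.sqrt (∑ i, k.2 i ^ 2)) ∘
          (fun v : Vt => (v, fun _ : Fin n => (1:ℝ))))
          = fun _ : Vt => Real.sqrt n := by
        funext v
        simp
      rw [hcomp]
      rw [List.map_const', List.prod_replicate, Finset.length_toList, hDcard]
    -- compare the class sum with the full hom-sum
    have hfP : ∀ ij ∈ Ts.filter (fun ij => leadD ij = L),
        f ij = (Elist.map (fun e => e.2.2 (cmapD ij e.1.1) (cmapD ij e.2.1.1))).prod
          * (Klist.map (fun k => k.2 (cmapD ij k.1.1))).prod := by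
      intro ij hij
      obtain ⟨_, hijL⟩ := Finset.mem_filter.mp hij
      have hKone : (Klist.map (fun k => k.2 (cmapD ij k.1.1))).prod = 1 := by
        apply List.prod_eq_one
        intro y hy
        obtain ⟨k, hk, rfl⟩ := List.mem_map.mp hy
        rw [hKlist] at hk
        obtain ⟨v, _, rfl⟩ := List.mem_map.mp hk
        rfl
      rw [hKone, mul_one, hElist, List.map_map, hf]
      rw [show ((fun e : Vt × Vt × (Fin n → Fin n → ℝ) =>
          e.2.2 (cmapD ij e.1.1) (cmapD ij e.2.1.1)) ∘ (fun a : Fin l =>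
          ((⟨L (finSumFinEquiv (Sum.inl a)), hLL _⟩ : Vt),
            (⟨L (finSumFinEquiv (Sum.inr a)), hLL _⟩ : Vt), fun i j => B a i j)))
          = fun a : Fin l => B a (cmapD ij (L (finSumFinEquiv (Sum.inl a))))
            (cmapD ij (L (finSumFinEquiv (Sum.inr a)))) from rfl]
      rw [← Fin.prod_univ_def]
      apply Finset.prod_congr rfl
      intro a _
      have h1 : cmapD ij (L (finSumFinEquiv (Sum.inl a))) = ij.1 a := by
        rw [← hijL, leadD_spec, cmapD_inl]
      have h2 : cmapD ij (L (finSumFinEquiv (Sum.inr a))) = ij.2 a := by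
        rw [← hijL, leadD_spec, cmapD_inr]
      rw [h1, h2]
    have hPnn : ∀ ψ : Vt → Fin n,
        0 ≤ (Elist.map (fun e => e.2.2 (ψ e.1) (ψ e.2.1))).prod
          * (Klist.map (fun k => k.2 (ψ k.1))).prod := by
      intro ψ
      apply mul_nonneg
      · apply List.prod_nonneg
        intro y hy
        obtain ⟨e, he, rfl⟩ := List.mem_map.mp hy
        exact (hEh e he).2.2.2 _ _
      · apply List.prod_nonneg
        intro y hy
        obtain ⟨k, hk, rfl⟩ := List.mem_map.mp hy
        exact (hKh k hk).2 _
    have hinj : ∀ p ∈ Ts.filter (fun ij => leadD ij = L),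
        ∀ q ∈ Ts.filter (fun ij => leadD ij = L),
        (fun (v : Vt) => cmapD p v.1) = (fun (v : Vt) => cmapD q v.1) → p = q := by
      intro p hp q hq heq
      obtain ⟨_, hpL⟩ := Finset.mem_filter.mp hp
      obtain ⟨_, hqL⟩ := Finset.mem_filter.mp hq
      have hcm : ∀ t, cmapD p t = cmapD q t := by
        intro t
        have e1 : cmapD p t = cmapD p (L t) := by
          rw [← hpL, leadD_spec]
        have e2 : cmapD q t = cmapD q (L t) := by
          rw [← hqL, leadD_spec]
        rw [e1, e2]
        exact congrFun heq (⟨L t, hLL t⟩ : Vt)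
      apply Prod.ext
      · funext a
        rw [← cmapD_inl p a, ← cmapD_inl q a, hcm]
      · funext a
        rw [← cmapD_inr p a, ← cmapD_inr q a, hcm]
    calc ∑ ij ∈ Ts.filter (fun ij => leadD ij = L), f ij
        = ∑ ij ∈ Ts.filter (fun ij => leadD ij = L),
            ((Elist.map (fun e => e.2.2 (cmapD ij e.1.1) (cmapD ij e.2.1.1))).prod
              * (Klist.map (fun k => k.2 (cmapD ij k.1.1))).prod) :=
          Finset.sum_congr rfl hfP
      _ = ∑ ψ ∈ (Ts.filter (fun ij => leadD ij = L)).image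
            (fun ij => fun (v : Vt) => cmapD ij v.1),
            ((Elist.map (fun e => e.2.2 (ψ e.1) (ψ e.2.1))).prod
              * (Klist.map (fun k => k.2 (ψ k.1))).prod) :=
          by exact (Finset.sum_image (f := fun ψ : Vt → Fin n =>
            (Elist.map (fun e => e.2.2 (ψ e.1) (ψ e.2.1))).prod
              * (Klist.map (fun k => k.2 (ψ k.1))).prod) hinj).symm
      _ ≤ ∑ ψ : Vt → Fin n,
            ((Elist.map (fun e => e.2.2 (ψ e.1) (ψ e.2.1))).prod
              * (Klist.map (fun k => k.2 (ψ k.1))).prod) :=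
          Finset.sum_le_sum_of_subset_of_nonneg (Finset.subset_univ _)
            (fun ψ _ _ => hPnn ψ)
      _ ≤ 1 * (Elist.map (fun e => Real.sqrt (∑ i, ∑ j, e.2.2 i j ^ 2))).prod
            * (Klist.map (fun k => Real.sqrt (∑ i, k.2 i ^ 2))).prod := hcore
      _ ≤ 1 * 1 * (Real.sqrt n) ^ s := by
          rw [hNKeq]
          apply mul_le_mul_of_nonneg_right
          · rw [one_mul, one_mul]; exact hNE1
          · exact pow_nonneg (Real.sqrt_nonneg _) _
      _ = (n : ℝ) ^ ((s : ℝ) / 2) := by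
          rw [one_mul, one_mul, sqrt_pow_nat]
  calc ∑ L : Fin (l + l) → Fin (l + l), ∑ ij ∈ Ts.filter (fun ij => leadD ij = L), f ij
      ≤ ∑ _L : Fin (l + l) → Fin (l + l), (n : ℝ) ^ ((s : ℝ) / 2) :=
        Finset.sum_le_sum (fun L _ => hcl L)
    _ = (Fintype.card (Fin (l + l) → Fin (l + l)) : ℝ) * (n : ℝ) ^ ((s : ℝ) / 2) := by
        rw [Finset.sum_const, Finset.card_univ, nsmul_eq_mul]
    _ = (((l + l) ^ (l + l) : ℕ) : ℝ) * (n : ℝ) ^ ((s : ℝ) / 2) := by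
        rw [Fintype.card_fun, Fintype.card_fin]
    _ ≤ ((((l + l) ^ (l + l) : ℕ) : ℝ) + 1) * (n : ℝ) ^ ((s : ℝ) / 2) := by
        apply mul_le_mul_of_nonneg_right (by linarith) hrpow0
end

section
/- Quantitative injectivity of the componentwise Möbius-type map (key estimate in Proposition 4.1(a)): Let k be a positive integer, K ≥ 0, and κ_1, …, κ_k ∈ [0, K]. Define f : ℝ^k → ℝ^k componentwise by f_s(a) = a_s/(1 + κ_s·a_s). Then for all a, b ∈ ℝ^k such that 1 + κ_s·a_s ≠ 0 and 1 + κ_s·b_s ≠ 0 for every s ∈ {1,…,k}, one has ‖f(a) − f(b)‖ ≥ (1+K)^{−2}·‖a − b‖ / ((1 + ‖a‖)·(1 + ‖b‖)), where ‖·‖ denotes the Euclidean norm on ℝ^k. -/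
/-- Euclidean norm on `ℝ^k`. -/
noncomputable def e2norm {k : ℕ} (x : Fin k → ℝ) : ℝ := Real.sqrt (∑ i, x i ^ 2)

lemma e2norm_nonneg' {k : ℕ} (x : Fin k → ℝ) : 0 ≤ e2norm x := Real.sqrt_nonneg _

lemma abs_le_e2norm {k : ℕ} (x : Fin k → ℝ) (s : Fin k) : |x s| ≤ e2norm x := by
  have h : (x s) ^ 2 ≤ ∑ i, x i ^ 2 :=
    Finset.single_le_sum (fun i _ => sq_nonneg (x i)) (Finset.mem_univ s)
  calc |x s| = Real.sqrt ((x s) ^ 2) := by rw [Real.sqrt_sq_eq_abs]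
    _ ≤ e2norm x := Real.sqrt_le_sqrt h

/-- quantitative injectivity of the componentwise map
`f_s(a) = a_s / (1 + κ_s a_s)` with `0 ≤ κ_s ≤ K`. -/
theorem componentwise_map_quantitative_injectivity
    (k : ℕ) (hk : 0 < k) (K : ℝ) (hK : 0 ≤ K)
    (κ : Fin k → ℝ) (hκ : ∀ s, κ s ∈ Set.Icc (0 : ℝ) K)
    (f : (Fin k → ℝ) → Fin k → ℝ)
    (hf : ∀ a s, f a s = a s / (1 + κ s * a s)) :
    ∀ a b : Fin k → ℝ,
      (∀ s, 1 + κ s * a s ≠ 0) → (∀ s, 1 + κ s * b s ≠ 0) →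
      ((1 + K) ^ 2)⁻¹ * e2norm (a - b) / ((1 + e2norm a) * (1 + e2norm b))
        ≤ e2norm (f a - f b) := by
  intro a b ha hb
  have hA : 0 ≤ e2norm a := e2norm_nonneg' a
  have hB : 0 ≤ e2norm b := e2norm_nonneg' b
  set A := e2norm a with hAdef
  set B := e2norm b with hBdef
  set D := (1 + K) ^ 2 * ((1 + A) * (1 + B)) with hD
  have hDpos : 0 < D := by positivity
  have key : ∀ s, |a s - b s| ≤ D * |f a s - f b s| := by
    intro s
    obtain ⟨hκ0, hκK⟩ := hκ s
    have hdiff : f a s - f b s = (a s - b s) / ((1 + κ s * a s) * (1 + κ s * b s)) := by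
      have h1 := ha s
      have h2 := hb s
      rw [hf, hf, div_sub_div _ _ h1 h2]
      congr 1
      ring
    have habs : |a s - b s| = |f a s - f b s| * (|1 + κ s * a s| * |1 + κ s * b s|) := by
      rw [hdiff, abs_div, abs_mul]
      have h1 : |1 + κ s * a s| ≠ 0 := abs_ne_zero.mpr (ha s)
      have h2 : |1 + κ s * b s| ≠ 0 := abs_ne_zero.mpr (hb s)
      rw [div_mul_cancel₀ _ (mul_ne_zero h1 h2)]
    have bound : ∀ (x : Fin k → ℝ), |κ s * x s| ≤ K * e2norm x := by
      intro x
      rw [abs_mul, abs_of_nonneg hκ0]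
      exact mul_le_mul hκK (abs_le_e2norm x s) (abs_nonneg _) hK
    have h1 : |1 + κ s * a s| ≤ (1 + K) * (1 + A) := by
      have h := bound a
      have h2 := abs_add_le (1 : ℝ) (κ s * a s)
      have h3 : |(1 : ℝ)| = 1 := abs_one
      nlinarith
    have h2 : |1 + κ s * b s| ≤ (1 + K) * (1 + B) := by
      have h := bound b
      have h2 := abs_add_le (1 : ℝ) (κ s * b s)
      have h3 : |(1 : ℝ)| = 1 := abs_one
      nlinarith
    rw [habs, hD]
    have hf0 : 0 ≤ |f a s - f b s| := abs_nonneg _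
    have ha1 : 0 ≤ |1 + κ s * a s| := abs_nonneg _
    have hb1 : 0 ≤ |1 + κ s * b s| := abs_nonneg _
    nlinarith [mul_le_mul h1 h2 hb1 (by positivity : (0:ℝ) ≤ (1 + K) * (1 + A))]
  -- sum of squares
  have hsum : ∑ s, (a s - b s) ^ 2 ≤ D ^ 2 * ∑ s, (f a s - f b s) ^ 2 := by
    rw [Finset.mul_sum]
    apply Finset.sum_le_sum
    intro s _
    have := key s
    have h1 : |a s - b s| ^ 2 ≤ (D * |f a s - f b s|) ^ 2 := by
      apply pow_le_pow_left₀ (abs_nonneg _) this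
    rw [sq_abs] at h1
    calc (a s - b s) ^ 2 ≤ (D * |f a s - f b s|) ^ 2 := h1
      _ = D ^ 2 * (f a s - f b s) ^ 2 := by rw [mul_pow, sq_abs]
  have hNM : e2norm (a - b) ≤ D * e2norm (f a - f b) := by
    have h1 : e2norm (a - b) = Real.sqrt (∑ s, (a s - b s) ^ 2) := by
      simp [e2norm, Pi.sub_apply]
    have h2 : e2norm (f a - f b) = Real.sqrt (∑ s, (f a s - f b s) ^ 2) := by
      simp [e2norm, Pi.sub_apply]
    rw [h1, h2]
    calc Real.sqrt (∑ s, (a s - b s) ^ 2)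
        ≤ Real.sqrt (D ^ 2 * ∑ s, (f a s - f b s) ^ 2) := Real.sqrt_le_sqrt hsum
      _ = D * Real.sqrt (∑ s, (f a s - f b s) ^ 2) := by
          rw [Real.sqrt_mul (by positivity), Real.sqrt_sq hDpos.le]
  have heq : ((1 + K) ^ 2)⁻¹ * e2norm (a - b) / ((1 + A) * (1 + B))
      = e2norm (a - b) / D := by
    rw [hD]
    field_simp
  rw [heq, div_le_iff₀ hDpos]
  linarith [hNM, mul_comm D (e2norm (f a - f b)) ▸ hNM]
end
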